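/- arXiv:2408.09364 — 6 statements merged into one kernel-verified Lean document; each statement's English description precedes it below -/
import Mathlib

section
/- For every real α > 0 and every h ∈ C₀([0,∞)), the function G⁰_α h is twice continuously differentiable on (0,∞) and satisfies (1/2)·(G⁰_α h)''(x) = α·G⁰_α h(x) − h(x) for every x ∈ (0,∞). -/
open MeasureTheory Real Filter Topology

/-- The resolvent density of killed Brownian motion on `(0,∞)`. -/
noncomputable def g0 (α x y : ℝ) : ℝ :=
  (2 / Real.sqrt (2 * α)) * Real.sinh (Real.sqrt (2 * α) * min x y) *
    Real.exp (-(Real.sqrt (2 * α) * max x y))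

/-- The resolvent `G⁰_α h` of killed Brownian motion on `(0,∞)`. -/
noncomputable def G0 (α : ℝ) (h : ℝ → ℝ) (x : ℝ) : ℝ :=
  ∫ y in Set.Ioi (0 : ℝ), g0 α x y * h y

/-- `h ∈ C₀([0,∞))`: continuous on `[0,∞)` and vanishing at infinity. -/
def MemC0 (h : ℝ → ℝ) : Prop :=
  ContinuousOn h (Set.Ici 0) ∧ Filter.Tendsto h Filter.atTop (nhds 0)

/-- For `α > 0` and `h ∈ C₀([0,∞))`, the function `G⁰_α h` is twice continuously
differentiable on `(0,∞)` and `(1/2)·(G⁰_α h)'' = α·G⁰_α h − h` there. -/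
theorem stmt0 (α : ℝ) (hα : 0 < α) (h : ℝ → ℝ) (hh : MemC0 h) :
    ContDiffOn ℝ 2 (G0 α h) (Set.Ioi 0) ∧
      ∀ x ∈ Set.Ioi (0 : ℝ),
        (1 / 2) * deriv (deriv (G0 α h)) x = α * G0 α h x - h x := by
  obtain ⟨hcont, hlim⟩ := hh
  set c := Real.sqrt (2 * α) with hc_def
  have hc : 0 < c := Real.sqrt_pos.mpr (by linarith)
  have hc2 : c ^ 2 = 2 * α := by rw [hc_def]; exact Real.sq_sqrt (by linarith)
  -- boundedness of h on [0, ∞)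
  obtain ⟨M, hM⟩ : ∃ M : ℝ, ∀ y ∈ Set.Ici (0 : ℝ), |h y| ≤ M := by
    have h1 : ∀ᶠ y in atTop, |h y| < 1 := by
      simpa [Real.dist_eq] using Metric.tendsto_nhds.mp hlim 1 one_pos
    obtain ⟨N, hN⟩ := Filter.eventually_atTop.mp h1
    obtain ⟨C, hC⟩ := (isCompact_Icc (a := (0:ℝ)) (b := max N 0)).exists_bound_of_continuousOn
      (hcont.mono Set.Icc_subset_Ici_self)
    refine ⟨max C 1, fun y hy => ?_⟩
    rcases le_or_gt y (max N 0) with hy' | hy'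
    · exact le_trans (by simpa using hC y ⟨hy, hy'⟩) (le_max_left _ _)
    · exact le_trans (hN y (le_of_lt (lt_of_le_of_lt (le_max_left _ _) hy'))).le (le_max_right _ _)
  -- the two auxiliary integrands
  set φ : ℝ → ℝ := fun y => Real.sinh (c * y) * h y with hφ_def
  set ψ : ℝ → ℝ := fun y => Real.exp (-(c * y)) * h y with hψ_def
  have hcontAt : ∀ x ∈ Set.Ioi (0:ℝ), ContinuousAt h x := fun x hx =>
    hcont.continuousAt (Filter.mem_of_superset (isOpen_Ioi.mem_nhds hx) Set.Ioi_subset_Ici_self)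
  have hsinhc : Continuous fun y : ℝ => Real.sinh (c * y) := by fun_prop
  have hexpc : Continuous fun y : ℝ => Real.exp (-(c * y)) := by fun_prop
  have hφc : ContinuousOn φ (Set.Ici 0) := hsinhc.continuousOn.mul hcont
  have hψc : ContinuousOn ψ (Set.Ici 0) := hexpc.continuousOn.mul hcont
  -- integrability of ψ on (0, ∞)
  have hψInt : IntegrableOn ψ (Set.Ioi 0) := by
    refine Integrable.mono' ((exp_neg_integrableOn_Ioi 0 hc).const_mul M) ?_ ?_
    · exact (hψc.mono Set.Ioi_subset_Ici_self).aestronglyMeasurable measurableSet_Ioi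
    · filter_upwards [ae_restrict_mem measurableSet_Ioi] with y hy
      have h0 : (0:ℝ) ≤ y := le_of_lt hy
      have hn : ‖ψ y‖ = Real.exp (-(c * y)) * |h y| := by
        rw [hψ_def]; simp [abs_mul, abs_of_pos (Real.exp_pos _)]
      rw [hn]
      calc Real.exp (-(c * y)) * |h y| ≤ Real.exp (-(c * y)) * M :=
            mul_le_mul_of_nonneg_left (hM y h0) (Real.exp_pos _).le
        _ = M * Real.exp (-c * y) := by rw [neg_mul]; ring
  have hφIntOn : ∀ x : ℝ, IntegrableOn φ (Set.Ioc 0 x) := fun x =>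
    ((hφc.mono Set.Icc_subset_Ici_self).integrableOn_Icc).mono_set Set.Ioc_subset_Icc_self
  have hψIntOn : ∀ x : ℝ, IntegrableOn ψ (Set.Ioc 0 x) := fun x =>
    hψInt.mono_set Set.Ioc_subset_Ioi_self
  -- the building blocks
  set A : ℝ → ℝ := fun x => ∫ y in (0:ℝ)..x, φ y with hA_def
  set B : ℝ → ℝ := fun x => ∫ y in (0:ℝ)..x, ψ y with hB_def
  set I : ℝ := ∫ y in Set.Ioi (0:ℝ), ψ y with hI_def
  set F : ℝ → ℝ := fun x =>
    (2 / c) * (Real.exp (-(c * x)) * A x + Real.sinh (c * x) * (I - B x)) with hF_def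
  -- G0 agrees with F on (0, ∞)
  have hGF : ∀ x ∈ Set.Ioi (0:ℝ), G0 α h x = F x := by
    intro x hx
    have hxpos : (0:ℝ) < x := hx
    have hsplit : Set.Ioc 0 x ∪ Set.Ioi x = Set.Ioi (0:ℝ) := Set.Ioc_union_Ioi_eq_Ioi hxpos.le
    have heq1 : Set.EqOn (fun y => g0 α x y * h y)
        (fun y => ((2 / c) * Real.exp (-(c * x))) * φ y) (Set.Ioc 0 x) := by
      intro y hy
      have h1 : min x y = y := min_eq_right hy.2
      have h2 : max x y = x := max_eq_left hy.2
      simp only [g0, ← hc_def, h1, h2, hφ_def]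
      ring
    have heq2 : Set.EqOn (fun y => g0 α x y * h y)
        (fun y => ((2 / c) * Real.sinh (c * x)) * ψ y) (Set.Ioi x) := by
      intro y hy
      have h1 : min x y = x := min_eq_left (le_of_lt hy)
      have h2 : max x y = y := max_eq_right (le_of_lt hy)
      simp only [g0, ← hc_def, h1, h2, hψ_def]
      ring
    have hint1 : IntegrableOn (fun y => g0 α x y * h y) (Set.Ioc 0 x) :=
      MeasureTheory.IntegrableOn.congr_fun
        ((hφIntOn x).const_mul ((2 / c) * Real.exp (-(c * x))))
        heq1.symm measurableSet_Ioc
    have hint2 : IntegrableOn (fun y => g0 α x y * h y) (Set.Ioi x) :=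
      MeasureTheory.IntegrableOn.congr_fun
        ((hψInt.mono_set (Set.Ioi_subset_Ioi hxpos.le)).const_mul
          ((2 / c) * Real.sinh (c * x))) heq2.symm measurableSet_Ioi
    have hBx : B x = ∫ y in Set.Ioc 0 x, ψ y := intervalIntegral.integral_of_le hxpos.le
    have hAx : A x = ∫ y in Set.Ioc 0 x, φ y := intervalIntegral.integral_of_le hxpos.le
    have hIψ : ∫ y in Set.Ioi x, ψ y = I - B x := by
      have hu := setIntegral_union (Set.Ioc_disjoint_Ioi (le_refl x)) measurableSet_Ioi
        (hψIntOn x) (hψInt.mono_set (Set.Ioi_subset_Ioi hxpos.le))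
      rw [hsplit, ← hI_def, ← hBx] at hu
      linarith
    have e1 : ∫ y in Set.Ioc 0 x, g0 α x y * h y
        = (2 / c) * Real.exp (-(c * x)) * A x := by
      rw [setIntegral_congr_fun measurableSet_Ioc heq1, integral_const_mul, hAx]
    have e2 : ∫ y in Set.Ioi x, g0 α x y * h y
        = (2 / c) * Real.sinh (c * x) * (I - B x) := by
      rw [setIntegral_congr_fun measurableSet_Ioi heq2, integral_const_mul, hIψ]
    calc G0 α h x = ∫ y in Set.Ioc 0 x ∪ Set.Ioi x, g0 α x y * h y := by
          rw [hsplit]; rfl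
      _ = (∫ y in Set.Ioc 0 x, g0 α x y * h y) + ∫ y in Set.Ioi x, g0 α x y * h y :=
          setIntegral_union (Set.Ioc_disjoint_Ioi (le_refl x)) measurableSet_Ioi hint1 hint2
      _ = F x := by rw [e1, e2, hF_def]; ring
  -- derivatives of A and B on (0, ∞)
  have hA' : ∀ x ∈ Set.Ioi (0:ℝ), HasDerivAt A (φ x) x := by
    intro x hx
    refine intervalIntegral.integral_hasDerivAt_right
      ((intervalIntegrable_iff_integrableOn_Ioc_of_le (le_of_lt hx)).mpr (hφIntOn x))
      ⟨Set.Ioi 0, isOpen_Ioi.mem_nhds hx,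
        (hφc.mono Set.Ioi_subset_Ici_self).aestronglyMeasurable measurableSet_Ioi⟩ ?_
    exact hsinhc.continuousAt.mul (hcontAt x hx)
  have hB' : ∀ x ∈ Set.Ioi (0:ℝ), HasDerivAt B (ψ x) x := by
    intro x hx
    refine intervalIntegral.integral_hasDerivAt_right
      ((intervalIntegrable_iff_integrableOn_Ioc_of_le (le_of_lt hx)).mpr (hψIntOn x))
      ⟨Set.Ioi 0, isOpen_Ioi.mem_nhds hx,
        (hψc.mono Set.Ioi_subset_Ici_self).aestronglyMeasurable measurableSet_Ioi⟩ ?_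
    exact hexpc.continuousAt.mul (hcontAt x hx)
  -- first and second derivatives of F
  set F1 : ℝ → ℝ := fun x =>
    2 * (-(Real.exp (-(c * x))) * A x + Real.cosh (c * x) * (I - B x)) with hF1_def
  have hlin : ∀ x : ℝ, HasDerivAt (fun x : ℝ => -(c * x)) (-c) x := by
    intro x
    simpa using ((hasDerivAt_id' x).const_mul c).fun_neg
  have hexp' : ∀ x : ℝ, HasDerivAt (fun x => Real.exp (-(c * x)))
      (Real.exp (-(c * x)) * -c) x := fun x => (hlin x).exp
  have hsinh' : ∀ x : ℝ, HasDerivAt (fun x => Real.sinh (c * x))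
      (Real.cosh (c * x) * c) x := by
    intro x
    simpa using ((hasDerivAt_id x).const_mul c).sinh
  have hcosh' : ∀ x : ℝ, HasDerivAt (fun x => Real.cosh (c * x))
      (Real.sinh (c * x) * c) x := by
    intro x
    simpa using ((hasDerivAt_id x).const_mul c).cosh
  have hF' : ∀ x ∈ Set.Ioi (0:ℝ), HasDerivAt F (F1 x) x := by
    intro x hx
    have key : Real.exp (-(c * x)) * φ x = Real.sinh (c * x) * ψ x := by
      simp only [hφ_def, hψ_def]; ring
    have hd := (((hexp' x).mul (hA' x hx)).add
      ((hsinh' x).mul ((hB' x hx).const_sub I))).const_mul (2 / c)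
    rw [hF_def]
    refine hd.congr_deriv (Eq.symm ?_)
    rw [key, hF1_def]
    field_simp
    ring
  have hkey1 : ∀ x : ℝ, Real.exp (-(c * x)) * (Real.sinh (c * x) + Real.cosh (c * x)) = 1 := by
    intro x
    rw [Real.sinh_add_cosh, ← Real.exp_add]
    simp
  have hF1' : ∀ x ∈ Set.Ioi (0:ℝ), HasDerivAt F1 (2 * α * F x - 2 * h x) x := by
    intro x hx
    have hd := ((((hexp' x).neg.mul (hA' x hx)).add
      ((hcosh' x).mul ((hB' x hx).const_sub I))).const_mul 2)
    rw [hF1_def]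
    refine hd.congr_deriv (Eq.symm ?_)
    rw [show α = c ^ 2 / 2 by linarith, hF_def]
    simp only [hφ_def, hψ_def]
    field_simp
    simp only [Pi.neg_apply]
    linear_combination (h x) * hkey1 x
  -- transfer to G0
  have hG' : ∀ x ∈ Set.Ioi (0:ℝ), HasDerivAt (G0 α h) (F1 x) x := by
    intro x hx
    have hev : G0 α h =ᶠ[𝓝 x] F := by
      filter_upwards [isOpen_Ioi.mem_nhds hx] with y hy using hGF y hy
    exact (hF' x hx).congr_of_eventuallyEq hev
  have hderivG : Set.EqOn (deriv (G0 α h)) F1 (Set.Ioi 0) := fun x hx => (hG' x hx).deriv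
  have hG'' : ∀ x ∈ Set.Ioi (0:ℝ), HasDerivAt (deriv (G0 α h)) (2 * α * F x - 2 * h x) x := by
    intro x hx
    have hev : deriv (G0 α h) =ᶠ[𝓝 x] F1 := by
      filter_upwards [isOpen_Ioi.mem_nhds hx] with y hy using hderivG hy
    exact (hF1' x hx).congr_of_eventuallyEq hev
  have hd2 : ∀ x ∈ Set.Ioi (0:ℝ), deriv (deriv (G0 α h)) x = 2 * α * F x - 2 * h x :=
    fun x hx => (hG'' x hx).deriv
  constructor
  · rw [show (2 : WithTop ℕ∞) = 1 + 1 by norm_num,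
      contDiffOn_succ_iff_deriv_of_isOpen isOpen_Ioi]
    refine ⟨fun x hx => (hG' x hx).differentiableAt.differentiableWithinAt, by simp, ?_⟩
    rw [show (1 : WithTop ℕ∞) = 0 + 1 by norm_num,
      contDiffOn_succ_iff_deriv_of_isOpen isOpen_Ioi]
    refine ⟨fun x hx => (hG'' x hx).differentiableAt.differentiableWithinAt, by simp, ?_⟩
    rw [contDiffOn_zero]
    have hFc : ContinuousOn F (Set.Ioi 0) := fun x hx =>
      ((hF' x hx).continuousAt).continuousWithinAt
    refine ContinuousOn.congr ?_ (fun x hx => hd2 x hx)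
    exact (continuousOn_const.mul hFc).sub
      (continuousOn_const.mul (hcont.mono Set.Ioi_subset_Ici_self))
  · intro x hx
    rw [hd2 x hx, hGF x hx]
    ring
end

section
/- For every real α > 0 and every h ∈ C₀([0,∞)), the function G⁰_α h is differentiable on (0,∞) with (√(2α)/2)·(G⁰_α h)'(x) = −√(2α)·e^{−√(2α)x}·∫₀ˣ sinh(√(2α)y)·h(y) dy + √(2α)·cosh(√(2α)x)·∫ₓ^∞ e^{−√(2α)y}·h(y) dy for all x > 0, and consequently lim_{x→0⁺} (G⁰_α h)'(x) = 2·∫₀^∞ h(y)·e^{−√(2α)y} dy. -/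
open MeasureTheory Real Filter Topology

/-- Integrability of `k·h` on `Ioc 0 x` for continuous `k` and `h` continuous on `[0,∞)`. -/
lemma aux_int_Ioc (k h : ℝ → ℝ) (hk : Continuous k) (hcont : ContinuousOn h (Set.Ici 0))
    (x : ℝ) : IntegrableOn (fun y => k y * h y) (Set.Ioc 0 x) := by
  have hc : ContinuousOn (fun y => k y * h y) (Set.Icc 0 x) :=
    hk.continuousOn.mul (hcont.mono Set.Icc_subset_Ici_self)
  exact hc.integrableOn_Icc.mono_set Set.Ioc_subset_Icc_self

/-- FTC for the primitive `t ↦ ∫_{(0,t]} k·h`. -/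
lemma aux_hasDerivAt (k h : ℝ → ℝ) (hk : Continuous k) (hcont : ContinuousOn h (Set.Ici 0))
    (x : ℝ) (hx : 0 < x) :
    HasDerivAt (fun t => ∫ y in Set.Ioc (0:ℝ) t, k y * h y) (k x * h x) x := by
  have hmem : Set.Ioi (0:ℝ) ∈ 𝓝 x := Ioi_mem_nhds hx
  have hconts : ContinuousOn (fun y => k y * h y) (Set.Ioi 0) :=
    hk.continuousOn.mul (hcont.mono Set.Ioi_subset_Ici_self)
  have hF : HasDerivAt (fun t => ∫ y in (0:ℝ)..t, k y * h y) (k x * h x) x := by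
    refine intervalIntegral.integral_hasDerivAt_right ?_
      ⟨Set.Ioi 0, hmem, hconts.aestronglyMeasurable measurableSet_Ioi⟩
      (hconts.continuousAt hmem)
    exact (intervalIntegrable_iff_integrableOn_Ioc_of_le hx.le).mpr
      (aux_int_Ioc k h hk hcont x)
  refine hF.congr_of_eventuallyEq ?_
  filter_upwards [hmem] with t ht
  exact (intervalIntegral.integral_of_le (le_of_lt ht)).symm

/-- The primitive tends to `0` as `t → 0⁺`. -/
lemma aux_tendsto (k h : ℝ → ℝ) (hk : Continuous k) (hcont : ContinuousOn h (Set.Ici 0))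
    (C : ℝ) (hC : ∀ y ∈ Set.Ici (0:ℝ), |h y| ≤ C) (hC0 : 0 ≤ C) :
    Tendsto (fun t => ∫ y in Set.Ioc (0:ℝ) t, k y * h y) (𝓝[>] 0) (𝓝 0) := by
  obtain ⟨K, hK⟩ := (isCompact_Icc (a := (0:ℝ)) (b := 1)).exists_bound_of_continuousOn
    hk.continuousOn
  have hK0 : 0 ≤ K := le_trans (norm_nonneg _) (hK 0 (by norm_num))
  have hbound : ∀ t ∈ Set.Ioc (0:ℝ) 1,
      ‖∫ y in Set.Ioc (0:ℝ) t, k y * h y‖ ≤ K * C * t := by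
    intro t ht
    have hmeas : AEStronglyMeasurable (fun y => k y * h y)
        (volume.restrict (Set.Ioc (0:ℝ) t)) :=
      (hk.continuousOn.mul
        (hcont.mono (Set.Ioc_subset_Icc_self.trans Set.Icc_subset_Ici_self))).aestronglyMeasurable
        measurableSet_Ioc
    have h1 : ‖∫ y in Set.Ioc (0:ℝ) t, k y * h y‖
        ≤ K * C * (volume (Set.Ioc (0:ℝ) t)).toReal := by
      refine norm_setIntegral_le_of_norm_le_const ?_ ?_
      · rw [Real.volume_Ioc]; exact ENNReal.ofReal_lt_top
      · intro y hy
        have hy0 : 0 ≤ y := hy.1.le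
        have hy1 : y ∈ Set.Icc (0:ℝ) 1 := ⟨hy0, hy.2.trans ht.2⟩
        rw [norm_mul]
        exact mul_le_mul (hK y hy1) (by simpa [Real.norm_eq_abs] using hC y hy0)
          (norm_nonneg _) hK0
    rw [Real.volume_Ioc, ENNReal.toReal_ofReal (by linarith [ht.1.le] : (0:ℝ) ≤ t - 0),
      sub_zero] at h1
    exact h1
  have hg : Tendsto (fun t : ℝ => K * C * t) (𝓝[>] 0) (𝓝 0) := by
    have h0 : Tendsto (fun t : ℝ => K * C * t) (𝓝 0) (𝓝 (K * C * 0)) :=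
      (continuous_const.mul continuous_id').tendsto 0
    simpa using h0.mono_left nhdsWithin_le_nhds
  refine squeeze_zero_norm' ?_ hg
  filter_upwards [Ioc_mem_nhdsGT (by norm_num : (0:ℝ) < 1)] with t ht
  exact hbound t ht

/-- For `α > 0` and `h ∈ C₀([0,∞))`, `G⁰_α h` is differentiable on `(0,∞)` with
`(√(2α)/2)·(G⁰_α h)'(x) = −√(2α)·e^{−√(2α)x}·∫₀ˣ sinh(√(2α)y) h(y) dy
  + √(2α)·cosh(√(2α)x)·∫ₓ^∞ e^{−√(2α)y} h(y) dy`,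
and `(G⁰_α h)'(x) → 2·∫₀^∞ h(y)·e^{−√(2α)y} dy` as `x → 0⁺`. -/
theorem stmt1 (α : ℝ) (hα : 0 < α) (h : ℝ → ℝ) (hh : MemC0 h) :
    (∀ x ∈ Set.Ioi (0 : ℝ),
      DifferentiableAt ℝ (G0 α h) x ∧
        Real.sqrt (2 * α) / 2 * deriv (G0 α h) x =
          -Real.sqrt (2 * α) * Real.exp (-(Real.sqrt (2 * α) * x)) *
              (∫ y in Set.Ioc (0 : ℝ) x, Real.sinh (Real.sqrt (2 * α) * y) * h y) +
            Real.sqrt (2 * α) * Real.cosh (Real.sqrt (2 * α) * x) *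
              (∫ y in Set.Ioi x, Real.exp (-(Real.sqrt (2 * α) * y)) * h y)) ∧
    Filter.Tendsto (deriv (G0 α h)) (nhdsWithin 0 (Set.Ioi 0))
      (nhds (2 * ∫ y in Set.Ioi (0 : ℝ), h y * Real.exp (-(Real.sqrt (2 * α) * y)))) := by
  set c := Real.sqrt (2 * α) with hcdef
  have hc : 0 < c := Real.sqrt_pos.mpr (by linarith)
  -- boundedness of h on [0,∞)
  obtain ⟨C, hC⟩ : ∃ C, ∀ y ∈ Set.Ici (0:ℝ), |h y| ≤ C := by
    obtain ⟨M, hM⟩ := (Metric.tendsto_atTop.mp hh.2 1 one_pos)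
    obtain ⟨C₀, hC₀⟩ := (isCompact_Icc (a := (0:ℝ))
      (b := max M 0)).exists_bound_of_continuousOn (hh.1.mono Set.Icc_subset_Ici_self)
    refine ⟨max C₀ 1, fun y hy => ?_⟩
    rcases le_total y (max M 0) with h1 | h1
    · exact le_trans (by simpa [Real.norm_eq_abs] using hC₀ y ⟨hy, h1⟩) (le_max_left _ _)
    · have := hM y (le_trans (le_max_left _ _) h1)
      rw [Real.dist_eq, sub_zero] at this
      exact le_trans this.le (le_max_right _ _)
  have hC0 : 0 ≤ C := le_trans (abs_nonneg _) (hC 0 (Set.mem_Ici.mpr le_rfl))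
  -- continuity of the kernels
  have hsinhc : Continuous (fun y : ℝ => Real.sinh (c * y)) :=
    Real.continuous_sinh.comp (continuous_const.mul continuous_id)
  have hexpc : Continuous (fun y : ℝ => Real.exp (-(c * y))) :=
    ((continuous_const.mul continuous_id).neg).rexp
  -- integrability of the exponential part on tails
  have hgIoi : ∀ x : ℝ, 0 ≤ x →
      IntegrableOn (fun y => Real.exp (-(c * y)) * h y) (Set.Ioi x) := by
    intro x hx
    have hgcont : ContinuousOn (fun y => Real.exp (-(c * y)) * h y) (Set.Ici 0) :=
      hexpc.continuousOn.mul hh.1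
    refine ((exp_neg_integrableOn_Ioi x hc).const_mul C).mono' ?_ ?_
    · exact (hgcont.mono (fun y hy => le_trans hx (le_of_lt hy))).aestronglyMeasurable
        measurableSet_Ioi
    · rw [ae_restrict_iff' measurableSet_Ioi]
      refine ae_of_all _ fun y hy => ?_
      have hy0 : 0 ≤ y := le_trans hx (le_of_lt hy)
      rw [norm_mul, Real.norm_eq_abs, Real.norm_eq_abs,
        abs_of_pos (Real.exp_pos _), neg_mul]
      calc Real.exp (-(c * y)) * |h y| ≤ Real.exp (-(c * y)) * C :=
            mul_le_mul_of_nonneg_left (hC y hy0) (Real.exp_pos _).le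
        _ = C * Real.exp (-(c * y)) := mul_comm _ _
  -- the split of B
  have hBsplit : ∀ x : ℝ, 0 ≤ x →
      (∫ y in Set.Ioi x, Real.exp (-(c * y)) * h y)
        = (∫ y in Set.Ioi (0:ℝ), Real.exp (-(c * y)) * h y)
          - ∫ y in Set.Ioc (0:ℝ) x, Real.exp (-(c * y)) * h y := by
    intro x hx
    have hdisj : Disjoint (Set.Ioc (0:ℝ) x) (Set.Ioi x) := by
      rw [Set.disjoint_left]
      rintro a ⟨_, ha2⟩ ha3
      exact absurd ha3 (not_lt.mpr ha2)
    have := setIntegral_union hdisj measurableSet_Ioi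
      (aux_int_Ioc _ h hexpc hh.1 x) (hgIoi x hx)
    rw [Set.Ioc_union_Ioi_eq_Ioi hx] at this
    linarith
  -- the split of G0
  have hsplit : ∀ x : ℝ, 0 < x → G0 α h x
      = (2 / c) * (Real.exp (-(c * x)) * (∫ y in Set.Ioc (0:ℝ) x, Real.sinh (c * y) * h y)
        + Real.sinh (c * x) * (∫ y in Set.Ioi x, Real.exp (-(c * y)) * h y)) := by
    intro x hx
    have hdisj : Disjoint (Set.Ioc (0:ℝ) x) (Set.Ioi x) := by
      rw [Set.disjoint_left]
      rintro a ⟨_, ha2⟩ ha3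
      exact absurd ha3 (not_lt.mpr ha2)
    have heq1 : Set.EqOn (fun y => (2 / c * Real.exp (-(c * x))) * (Real.sinh (c * y) * h y))
        (fun y => g0 α x y * h y) (Set.Ioc 0 x) := by
      intro y hy
      simp only [g0, ← hcdef, min_eq_right hy.2, max_eq_left hy.2]
      ring
    have heq2 : Set.EqOn (fun y => (2 / c * Real.sinh (c * x)) * (Real.exp (-(c * y)) * h y))
        (fun y => g0 α x y * h y) (Set.Ioi x) := by
      intro y hy
      simp only [g0, ← hcdef, min_eq_left (le_of_lt (Set.mem_Ioi.mp hy)), max_eq_right (le_of_lt (Set.mem_Ioi.mp hy))]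
      ring
    have h1 : IntegrableOn (fun y => g0 α x y * h y) (Set.Ioc 0 x) :=
      IntegrableOn.congr_fun ((aux_int_Ioc _ h hsinhc hh.1 x).const_mul _) heq1 measurableSet_Ioc
    have h2 : IntegrableOn (fun y => g0 α x y * h y) (Set.Ioi x) :=
      IntegrableOn.congr_fun ((hgIoi x hx.le).const_mul _) heq2 measurableSet_Ioi
    have hsum := setIntegral_union hdisj measurableSet_Ioi h1 h2
    rw [Set.Ioc_union_Ioi_eq_Ioi hx.le] at hsum
    have e1 : (∫ y in Set.Ioc (0:ℝ) x, g0 α x y * h y)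
        = (2 / c * Real.exp (-(c * x))) * ∫ y in Set.Ioc (0:ℝ) x, Real.sinh (c * y) * h y := by
      rw [← integral_const_mul]
      exact (setIntegral_congr_fun measurableSet_Ioc heq1).symm
    have e2 : (∫ y in Set.Ioi x, g0 α x y * h y)
        = (2 / c * Real.sinh (c * x)) * ∫ y in Set.Ioi x, Real.exp (-(c * y)) * h y := by
      rw [← integral_const_mul]
      exact (setIntegral_congr_fun measurableSet_Ioi heq2).symm
    rw [G0, hsum, e1, e2]
    ring
  -- the main derivative computation
  have hmain : ∀ x : ℝ, 0 < x → HasDerivAt (G0 α h)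
      (2 * (-(Real.exp (-(c * x))) * (∫ y in Set.Ioc (0:ℝ) x, Real.sinh (c * y) * h y)
        + Real.cosh (c * x) * (∫ y in Set.Ioi x, Real.exp (-(c * y)) * h y))) x := by
    intro x hx
    have hA := aux_hasDerivAt (fun y => Real.sinh (c * y)) h hsinhc hh.1 x hx
    have hBprim := aux_hasDerivAt (fun y => Real.exp (-(c * y))) h hexpc hh.1 x hx
    have hB : HasDerivAt (fun t => ∫ y in Set.Ioi t, Real.exp (-(c * y)) * h y)
        (0 - Real.exp (-(c * x)) * h x) x := by
      have hconst : HasDerivAt (fun _ : ℝ => ∫ y in Set.Ioi (0:ℝ), Real.exp (-(c * y)) * h y)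
          (0 : ℝ) x := hasDerivAt_const _ _
      refine (hconst.sub hBprim).congr_of_eventuallyEq ?_
      filter_upwards [Ioi_mem_nhds hx] with t ht
      exact hBsplit t (le_of_lt ht)
    have hE : HasDerivAt (fun t : ℝ => Real.exp (-(c * t))) (Real.exp (-(c * x)) * (-c)) x := by
      have h1 : HasDerivAt (fun t : ℝ => -(c * t)) (-c) x := by
        exact (((hasDerivAt_id x).const_mul c).neg).congr_deriv (by simp)
      exact h1.exp
    have hS : HasDerivAt (fun t : ℝ => Real.sinh (c * t)) (Real.cosh (c * x) * c) x := by
      have h1 : HasDerivAt (fun t : ℝ => c * t) c x := by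
        simpa using (hasDerivAt_id x).const_mul c
      exact h1.sinh
    have hF := (((hE.mul hA).add (hS.mul hB)).const_mul (2 / c))
    have hG : HasDerivAt (G0 α h)
        ((2 / c) * ((Real.exp (-(c * x)) * (-c)
            * (∫ y in Set.Ioc (0:ℝ) x, Real.sinh (c * y) * h y)
          + Real.exp (-(c * x)) * (Real.sinh (c * x) * h x))
          + (Real.cosh (c * x) * c * (∫ y in Set.Ioi x, Real.exp (-(c * y)) * h y)
            + Real.sinh (c * x) * (0 - Real.exp (-(c * x)) * h x)))) x := by
      refine hF.congr_of_eventuallyEq ?_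
      filter_upwards [Ioi_mem_nhds hx] with t ht
      exact hsplit t ht
    convert hG using 1
    field_simp
    ring
  constructor
  · intro x hx
    have hd := hmain x hx
    refine ⟨hd.differentiableAt, ?_⟩
    rw [hd.deriv]
    ring
  · -- the limit as x → 0⁺
    have hAt := aux_tendsto (fun y => Real.sinh (c * y)) h hsinhc hh.1 C hC hC0
    have hprimt := aux_tendsto (fun y => Real.exp (-(c * y))) h hexpc hh.1 C hC hC0
    have hBt : Tendsto (fun t => ∫ y in Set.Ioi t, Real.exp (-(c * y)) * h y) (𝓝[>] (0:ℝ))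
        (𝓝 ((∫ y in Set.Ioi (0:ℝ), Real.exp (-(c * y)) * h y) - 0)) := by
      refine (tendsto_const_nhds.sub hprimt).congr' ?_
      filter_upwards [self_mem_nhdsWithin] with t ht
      exact (hBsplit t (le_of_lt ht)).symm
    have hEt : Tendsto (fun t : ℝ => Real.exp (-(c * t))) (𝓝[>] (0:ℝ)) (𝓝 1) := by
      have := (hexpc.tendsto 0).mono_left (nhdsWithin_le_nhds (s := Set.Ioi (0:ℝ)))
      simpa using this
    have hcosht : Tendsto (fun t : ℝ => Real.cosh (c * t)) (𝓝[>] (0:ℝ)) (𝓝 1) := by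
      have h0 : Tendsto (fun t : ℝ => Real.cosh (c * t)) (𝓝 0) (𝓝 (Real.cosh (c * 0))) :=
        (Real.continuous_cosh.comp (continuous_const.mul continuous_id')).tendsto 0
      simpa using h0.mono_left nhdsWithin_le_nhds
    have hcomb : Tendsto (fun t : ℝ =>
        2 * (-(Real.exp (-(c * t))) * (∫ y in Set.Ioc (0:ℝ) t, Real.sinh (c * y) * h y)
          + Real.cosh (c * t) * (∫ y in Set.Ioi t, Real.exp (-(c * y)) * h y)))
        (𝓝[>] (0:ℝ))
        (𝓝 (2 * (-(1:ℝ) * 0 + 1 * ((∫ y in Set.Ioi (0:ℝ), Real.exp (-(c * y)) * h y) - 0)))) :=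
      ((hEt.neg.mul hAt).add (hcosht.mul hBt)).const_mul 2
    have heq : (fun t : ℝ =>
        2 * (-(Real.exp (-(c * t))) * (∫ y in Set.Ioc (0:ℝ) t, Real.sinh (c * y) * h y)
          + Real.cosh (c * t) * (∫ y in Set.Ioi t, Real.exp (-(c * y)) * h y)))
        =ᶠ[𝓝[>] (0:ℝ)] deriv (G0 α h) := by
      filter_upwards [self_mem_nhdsWithin] with t ht
      exact ((hmain t ht).deriv).symm
    have hval : 2 * (-(1:ℝ) * 0 + 1 * ((∫ y in Set.Ioi (0:ℝ), Real.exp (-(c * y)) * h y) - 0))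
        = 2 * ∫ y in Set.Ioi (0:ℝ), h y * Real.exp (-(c * y)) := by
      simp_rw [show ∀ y, h y * Real.exp (-(c * y)) = Real.exp (-(c * y)) * h y from
        fun y => mul_comm _ _]
      ring
    exact hval ▸ hcomb.congr' heq
end

section
/- For every real α > 0 and every h ∈ C₀([0,∞)), the function G⁰_α h is continuous on (0,∞), G⁰_α h(x) → 0 as x → 0⁺, G⁰_α h(x) → 0 as x → ∞, and lim_{x→0⁺} G⁰_α h(x)/x = 2·∫₀^∞ e^{−√(2α)y}·h(y) dy. -/
open MeasureTheory Real Filter Topology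


lemma aux_exp_Ioi {c : ℝ} (hc : 0 < c) (x : ℝ) :
    ∫ y in Set.Ioi x, Real.exp (-(c*y)) = Real.exp (-(c*x)) / c := by
  have hderiv : ∀ y ∈ Set.Ioi x, HasDerivAt (fun y => -Real.exp (-(c*y)) / c)
      (Real.exp (-(c*y))) y := by
    intro y _
    have : HasDerivAt (fun y : ℝ => -(c*y)) (-c) y := by
      simpa using ((hasDerivAt_id y).const_mul c).fun_neg
    have := (this.exp.neg).div_const c
    refine this.congr_deriv ?_
    field_simp
  have hint : IntegrableOn (fun y => Real.exp (-(c*y))) (Set.Ioi x) := by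
    simpa [neg_mul] using exp_neg_integrableOn_Ioi x hc
  have htend : Tendsto (fun y => -Real.exp (-(c*y)) / c) atTop (𝓝 0) := by
    have h1 : Tendsto (fun y : ℝ => -(c*y)) atTop atBot :=
      tendsto_neg_atBot_iff.2 (tendsto_id.const_mul_atTop hc)
    have := (Real.tendsto_exp_atBot.comp h1).neg.div_const c
    simpa using this
  have hcont : ContinuousWithinAt (fun y => -Real.exp (-(c*y)) / c) (Set.Ici x) x := by
    have hco : Continuous (fun y : ℝ => -Real.exp (-(c*y)) / c) := by
      have : Continuous (fun y : ℝ => Real.exp (-(c*y))) := by fun_prop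
      exact this.neg.div_const c
    exact hco.continuousWithinAt
  have := integral_Ioi_of_hasDerivAt_of_tendsto hcont hderiv hint htend
  rw [this]; ring

lemma aux_int {c : ℝ} (hc : 0 < c) {k : ℝ → ℝ} (hk : Continuous k) {M : ℝ}
    (hM : ∀ y, |k y| ≤ M) (a : ℝ) :
    IntegrableOn (fun y => Real.exp (-(c*y)) * k y) (Set.Ioi a) := by
  have hg : IntegrableOn (fun y => Real.exp (-(c*y)) * M) (Set.Ioi a) := by
    have := (exp_neg_integrableOn_Ioi a hc).mul_const M
    simp only [neg_mul] at this
    exact this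
  refine Integrable.mono' hg ?_ ?_
  · exact (((Real.continuous_exp.comp (by fun_prop))).mul hk).aestronglyMeasurable.restrict
  · filter_upwards with y
    rw [Real.norm_eq_abs, abs_mul, abs_of_pos (Real.exp_pos _)]
    exact mul_le_mul_of_nonneg_left (hM y) (Real.exp_pos _).le

/-- For `α > 0` and `h ∈ C₀([0,∞))`: `G⁰_α h` is continuous on `(0,∞)`,
`G⁰_α h(x) → 0` as `x → 0⁺`, `G⁰_α h(x) → 0` as `x → ∞`, and
`G⁰_α h(x)/x → 2·∫₀^∞ e^{−√(2α)y} h(y) dy` as `x → 0⁺`. -/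
theorem stmt2 (α : ℝ) (hα : 0 < α) (h : ℝ → ℝ) (hh : MemC0 h) :
    ContinuousOn (G0 α h) (Set.Ioi 0) ∧
    Filter.Tendsto (G0 α h) (nhdsWithin 0 (Set.Ioi 0)) (nhds 0) ∧
    Filter.Tendsto (G0 α h) Filter.atTop (nhds 0) ∧
    Filter.Tendsto (fun x => G0 α h x / x) (nhdsWithin 0 (Set.Ioi 0))
      (nhds (2 * ∫ y in Set.Ioi (0 : ℝ), Real.exp (-(Real.sqrt (2 * α) * y)) * h y)) := by
  obtain ⟨hhc, hh0⟩ := hh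
  set c := Real.sqrt (2 * α) with hcdef
  have hc : 0 < c := Real.sqrt_pos.2 (by linarith)
  -- the continuous extension of h
  set k : ℝ → ℝ := fun y => h (max y 0) with hkdef
  have hk : Continuous k :=
    hhc.comp_continuous (continuous_id.max continuous_const) (fun y => Set.mem_Ici.2 (le_max_right _ _))
  have hkeq : ∀ y ∈ Set.Ioi (0:ℝ), h y = k y := by
    intro y hy
    simp only [hkdef, max_eq_left (le_of_lt (Set.mem_Ioi.1 hy))]
  have hkk : ∀ y, 0 ≤ y → k y = h y := by
    intro y hy; simp only [hkdef, max_eq_left hy]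
  have hk0 : Tendsto k atTop (𝓝 0) := by
    apply hh0.congr'
    filter_upwards [eventually_ge_atTop (0:ℝ)] with y hy
    exact (hkk y hy).symm
  -- boundedness
  obtain ⟨M, hM⟩ : ∃ M, ∀ y, |k y| ≤ M := by
    have h1 : ∀ᶠ y in atTop, |k y| ≤ 1 := by
      have := Metric.tendsto_nhds.1 hk0 1 one_pos
      filter_upwards [this] with y hy
      rw [Real.dist_eq, sub_zero] at hy
      exact hy.le
    obtain ⟨A, hA⟩ := eventually_atTop.1 h1
    obtain ⟨B, hB⟩ := (isCompact_Icc (a := (0:ℝ)) (b := max A 0)).exists_bound_of_continuousOn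
      hk.continuousOn
    refine ⟨max B 1, fun y => ?_⟩
    have hky : k y = k (max y 0) := by
      simp only [hkdef]
      congr 1
      rw [max_assoc, max_self]
    rcases le_or_gt (max y 0) (max A 0) with hle | hlt
    · have := hB (max y 0) ⟨le_max_right _ _, hle⟩
      rw [Real.norm_eq_abs] at this
      rw [hky]
      exact this.trans (le_max_left _ _)
    · have := hA (max y 0) ((le_max_left A 0).trans hlt.le)
      rw [hky]
      exact this.trans (le_max_right _ _)
  -- auxiliary functions
  set F : ℝ → ℝ := fun x => ∫ y in (0:ℝ)..x, Real.sinh (c*y) * k y with hFdef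
  set E : ℝ → ℝ := fun x => ∫ y in (0:ℝ)..x, Real.exp (-(c*y)) * k y with hEdef
  set T : ℝ := ∫ y in Set.Ioi (0:ℝ), Real.exp (-(c*y)) * k y with hTdef
  set R : ℝ → ℝ := fun x => ∫ y in Set.Ioi x, Real.exp (-(c*y)) * k y with hRdef
  have hfc : Continuous fun y => Real.sinh (c*y) * k y := by fun_prop
  have hec : Continuous fun y => Real.exp (-(c*y)) * k y := by fun_prop
  have hcontF : Continuous F :=
    intervalIntegral.continuous_primitive (fun a b => hfc.intervalIntegrable a b) 0
  have hcontE : Continuous E :=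
    intervalIntegral.continuous_primitive (fun a b => hec.intervalIntegrable a b) 0
  -- decomposition
  have hdecomp : ∀ x : ℝ, 0 < x →
      G0 α h x = (2/c) * (Real.exp (-(c*x)) * F x + Real.sinh (c*x) * R x) := by
    intro x hx
    have hgk : G0 α h x = ∫ y in Set.Ioi (0:ℝ), g0 α x y * k y := by
      apply setIntegral_congr_fun measurableSet_Ioi
      intro y hy
      show g0 α x y * h y = g0 α x y * k y
      rw [hkeq y hy]
    have hg0c : Continuous fun y => g0 α x y * k y := by
      apply Continuous.mul _ hk
      unfold g0
      apply Continuous.mul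
      · exact continuous_const.mul (Real.continuous_sinh.comp
          (continuous_const.mul (continuous_const.min continuous_id)))
      · exact Real.continuous_exp.comp
          ((continuous_const.mul (continuous_const.max continuous_id)).neg)
    have hgb : IntegrableOn (fun y => g0 α x y * k y) (Set.Ioi 0) := by
      have hgdom : IntegrableOn
          (fun y => (((2/c) * Real.sinh (c*x) * M)) * Real.exp (-(c*y))) (Set.Ioi 0) := by
        simpa [neg_mul, mul_comm, IntegrableOn] using
          (exp_neg_integrableOn_Ioi 0 hc).const_mul ((2/c) * Real.sinh (c*x) * M)
      refine Integrable.mono' hgdom hg0c.aestronglyMeasurable.restrict ?_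
      filter_upwards [ae_restrict_mem measurableSet_Ioi] with y hy
      have hy0 : (0:ℝ) < y := hy
      have hmin : 0 ≤ min x y := le_min hx.le hy0.le
      have hg0abs : |g0 α x y| ≤ (2/c) * Real.sinh (c*x) * Real.exp (-(c*y)) := by
        rw [g0, ← hcdef]
        have h2c : (0:ℝ) ≤ 2/c := by positivity
        have hs : 0 ≤ Real.sinh (c * min x y) := Real.sinh_nonneg_iff.2 (by positivity)
        rw [abs_of_nonneg (by positivity)]
        apply mul_le_mul
        · apply mul_le_mul_of_nonneg_left _ h2c
          exact Real.sinh_le_sinh.2 (mul_le_mul_of_nonneg_left (min_le_left x y) hc.le)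
        · exact Real.exp_le_exp.2 (neg_le_neg
            (mul_le_mul_of_nonneg_left (le_max_right x y) hc.le))
        · exact (Real.exp_pos _).le
        · positivity
      rw [Real.norm_eq_abs, abs_mul]
      calc |g0 α x y| * |k y| ≤ ((2/c) * Real.sinh (c*x) * Real.exp (-(c*y))) * M := by
            apply mul_le_mul hg0abs (hM y) (abs_nonneg _) (by positivity)
        _ = (2/c) * Real.sinh (c*x) * M * Real.exp (-(c*y)) := by ring
    have hsplit : Set.Ioi (0:ℝ) = Set.Ioc 0 x ∪ Set.Ioi x := (Set.Ioc_union_Ioi_eq_Ioi hx.le).symm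
    rw [hgk, hsplit, setIntegral_union (Set.Ioc_disjoint_Ioi le_rfl) measurableSet_Ioi
      (hgb.mono_set (by rw [hsplit]; exact Set.subset_union_left))
      (hgb.mono_set (by rw [hsplit]; exact Set.subset_union_right))]
    have e1 : ∫ y in Set.Ioc (0:ℝ) x, g0 α x y * k y
        = ((2/c) * Real.exp (-(c*x))) * ∫ y in Set.Ioc (0:ℝ) x, Real.sinh (c*y) * k y := by
      rw [← integral_const_mul]
      apply setIntegral_congr_fun measurableSet_Ioc
      intro y hy
      show g0 α x y * k y = (2/c) * Real.exp (-(c*x)) * (Real.sinh (c*y) * k y)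
      rw [g0, ← hcdef, min_eq_right hy.2, max_eq_left hy.2]
      ring
    have e2 : ∫ y in Set.Ioi x, g0 α x y * k y
        = ((2/c) * Real.sinh (c*x)) * R x := by
      rw [hRdef, ← integral_const_mul]
      apply setIntegral_congr_fun measurableSet_Ioi
      intro y hy
      have hxy : x ≤ y := le_of_lt (Set.mem_Ioi.1 hy)
      show g0 α x y * k y = (2/c) * Real.sinh (c*x) * (Real.exp (-(c*y)) * k y)
      rw [g0, ← hcdef, min_eq_left hxy, max_eq_right hxy]
      ring
    rw [e1, e2, hFdef]
    simp only [intervalIntegral.integral_of_le hx.le]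
    ring
  have hRE : ∀ x : ℝ, 0 < x → R x = T - E x := by
    intro x hx
    have hsplit : Set.Ioi (0:ℝ) = Set.Ioc 0 x ∪ Set.Ioi x := (Set.Ioc_union_Ioi_eq_Ioi hx.le).symm
    have h1 : T = E x + R x := by
      rw [hTdef, hsplit, setIntegral_union (Set.Ioc_disjoint_Ioi le_rfl) measurableSet_Ioi
        ((aux_int hc hk hM 0).mono_set (by rw [hsplit]; exact Set.subset_union_left))
        (aux_int hc hk hM x), hEdef]
      simp only [intervalIntegral.integral_of_le hx.le]
      rfl
    linarith [h1]
  set φ : ℝ → ℝ := fun x =>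
    (2/c) * (Real.exp (-(c*x)) * F x + Real.sinh (c*x) * (T - E x)) with hφdef
  have hφcont : Continuous φ := by
    apply Continuous.mul continuous_const
    apply Continuous.add
    · exact (by fun_prop : Continuous fun x => Real.exp (-(c*x))).mul hcontF
    · exact (by fun_prop : Continuous fun x => Real.sinh (c*x)).mul
        (continuous_const.sub hcontE)
  have hφG : ∀ x ∈ Set.Ioi (0:ℝ), G0 α h x = φ x := by
    intro x hx
    rw [hdecomp x hx, hRE x hx]
  have hF0 : F 0 = 0 := intervalIntegral.integral_same
  have hE0 : E 0 = 0 := intervalIntegral.integral_same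
  have hφ0 : φ 0 = 0 := by simp [hφdef, hF0]
  refine ⟨?_, ?_, ?_, ?_⟩
  · exact hφcont.continuousOn.congr hφG
  · refine Tendsto.congr' ?_ ((hφcont.tendsto 0).mono_left nhdsWithin_le_nhds |>.congr'
      (by rfl) |>.mono_right (by rw [hφ0]))
    filter_upwards [self_mem_nhdsWithin] with x hx using (hφG x hx).symm
  · -- at infinity
    have hsinhle : ∀ t : ℝ, Real.sinh t ≤ Real.exp t / 2 := by
      intro t
      rw [Real.sinh_eq]
      have := (Real.exp_pos (-t)).le
      linarith
    have t2 : Tendsto (fun x => Real.sinh (c*x) * R x) atTop (𝓝 0) := by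
      rw [Metric.tendsto_nhds]
      intro ε hε
      have hε' : 0 < c*ε/2 := by positivity
      have htail : ∀ᶠ y in atTop, |k y| ≤ c*ε/2 := by
        filter_upwards [Metric.tendsto_nhds.1 hk0 (c*ε/2) hε'] with y hy
        rw [Real.dist_eq, sub_zero] at hy
        exact hy.le
      obtain ⟨A, hA⟩ := eventually_atTop.1 htail
      filter_upwards [eventually_ge_atTop (max A 0)] with x hx
      have hxA : A ≤ x := (le_max_left A 0).trans hx
      have hx0 : (0:ℝ) ≤ x := (le_max_right A 0).trans hx
      rw [Real.dist_eq, sub_zero]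
      have hRbound : |R x| ≤ Real.exp (-(c*x)) * (ε/2) := by
        have h1 : |R x| ≤ ∫ y in Set.Ioi x, Real.exp (-(c*y)) * |k y| := by
          simpa [Real.norm_eq_abs, hRdef, abs_mul, abs_of_pos (Real.exp_pos _)] using
            norm_integral_le_integral_norm (μ := volume.restrict (Set.Ioi x))
              (fun y => Real.exp (-(c*y)) * k y)
        have h2 : ∫ y in Set.Ioi x, Real.exp (-(c*y)) * |k y|
            ≤ ∫ y in Set.Ioi x, Real.exp (-(c*y)) * (c*ε/2) := by
          apply setIntegral_mono_on
            (aux_int hc hk.abs (M := M) (fun y => by rw [abs_abs]; exact hM y) x)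
            (by simpa [neg_mul, IntegrableOn] using (exp_neg_integrableOn_Ioi x hc).mul_const (c*ε/2))
            measurableSet_Ioi
          intro y hy
          exact mul_le_mul_of_nonneg_left (hA y (hxA.trans (le_of_lt (Set.mem_Ioi.1 hy)))) (Real.exp_pos _).le
        have h3 : ∫ y in Set.Ioi x, Real.exp (-(c*y)) * (c*ε/2)
            = Real.exp (-(c*x)) * (ε/2) := by
          rw [integral_mul_const, aux_exp_Ioi hc x]
          field_simp
        calc |R x| ≤ ∫ y in Set.Ioi x, Real.exp (-(c*y)) * |k y| := h1
          _ ≤ ∫ y in Set.Ioi x, Real.exp (-(c*y)) * (c*ε/2) := h2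
          _ = Real.exp (-(c*x)) * (ε/2) := h3
      have hsinh : |Real.sinh (c*x)| ≤ Real.exp (c*x) / 2 := by
        rw [abs_of_nonneg (Real.sinh_nonneg_iff.2 (by positivity))]
        exact hsinhle _
      have hee : Real.exp (c*x) * Real.exp (-(c*x)) = 1 := by
        rw [← Real.exp_add]
        simp
      calc |Real.sinh (c*x) * R x| = |Real.sinh (c*x)| * |R x| := abs_mul _ _
        _ ≤ (Real.exp (c*x)/2) * (Real.exp (-(c*x)) * (ε/2)) :=
            mul_le_mul hsinh hRbound (abs_nonneg _) (by positivity)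
        _ = (Real.exp (c*x) * Real.exp (-(c*x))) * (ε/4) := by ring
        _ = ε/4 := by rw [hee, one_mul]
        _ < ε := by linarith
    have t1 : Tendsto (fun x => Real.exp (-(c*x)) * F x) atTop (𝓝 0) := by
      rw [Metric.tendsto_nhds]
      intro ε hε
      have hε' : 0 < c*ε/4 := by positivity
      have htail : ∀ᶠ y in atTop, |k y| ≤ c*ε/4 := by
        filter_upwards [Metric.tendsto_nhds.1 hk0 (c*ε/4) hε'] with y hy
        rw [Real.dist_eq, sub_zero] at hy
        exact hy.le
      obtain ⟨A₀, hA₀⟩ := eventually_atTop.1 htail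
      set A := max A₀ 0 with hAdef
      have hA : ∀ y, A ≤ y → |k y| ≤ c*ε/4 := fun y hy => hA₀ y ((le_max_left _ _).trans hy)
      have hA0 : (0:ℝ) ≤ A := le_max_right _ _
      set C := |F A| with hCdef
      have hexptop : Tendsto (fun x : ℝ => Real.exp (-(c*x))) atTop (𝓝 0) := by
        have h1 : Tendsto (fun x : ℝ => -(c*x)) atTop atBot :=
          tendsto_neg_atBot_iff.2 (tendsto_id.const_mul_atTop hc)
        exact Real.tendsto_exp_atBot.comp h1
      have hexp0 : Tendsto (fun x => Real.exp (-(c*x)) * C) atTop (𝓝 0) := by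
        simpa using hexptop.mul_const C
      filter_upwards [eventually_ge_atTop A,
        (Metric.tendsto_nhds.1 hexp0 (ε/2) (by positivity))] with x hx hx2
      rw [Real.dist_eq, sub_zero] at hx2 ⊢
      have hsplitF : F x = F A + ∫ y in A..x, Real.sinh (c*y) * k y := by
        rw [hFdef]
        exact (intervalIntegral.integral_add_adjacent_intervals
          (hfc.intervalIntegrable 0 A) (hfc.intervalIntegrable A x)).symm
      have hexpint : ∫ y in A..x, Real.exp (c*y)
          = (Real.exp (c*x) - Real.exp (c*A))/c := by
        have hd : ∀ y ∈ Set.uIcc A x, HasDerivAt (fun y => Real.exp (c*y)/c)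
            (Real.exp (c*y)) y := by
          intro y _
          have h1 : HasDerivAt (fun y : ℝ => c*y) c y := by
            simpa using (hasDerivAt_id y).const_mul c
          have h2 := (h1.exp).div_const c
          refine h2.congr_deriv ?_
          field_simp
        rw [intervalIntegral.integral_eq_sub_of_hasDerivAt hd
          ((by fun_prop : Continuous fun y : ℝ => Real.exp (c*y)).intervalIntegrable A x)]
        ring
      have hIbound : |∫ y in A..x, Real.sinh (c*y) * k y|
          ≤ (Real.exp (c*x) - Real.exp (c*A)) * (ε/8) := by
        have h1 : ‖∫ y in A..x, Real.sinh (c*y) * k y‖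
            ≤ ∫ y in A..x, ‖Real.sinh (c*y) * k y‖ :=
          intervalIntegral.norm_integral_le_integral_norm hx
        have h2 : ∫ y in A..x, ‖Real.sinh (c*y) * k y‖
            ≤ ∫ y in A..x, Real.exp (c*y) * (c*ε/8) := by
          apply intervalIntegral.integral_mono_on hx
            (hfc.norm.intervalIntegrable A x)
            (((by fun_prop : Continuous fun y : ℝ => Real.exp (c*y)).mul
              continuous_const).intervalIntegrable A x)
          intro y hy
          have hyA : A ≤ y := hy.1
          have hy0 : (0:ℝ) ≤ y := hA0.trans hyA
          rw [Real.norm_eq_abs, abs_mul,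
            abs_of_nonneg (Real.sinh_nonneg_iff.2 (by positivity))]
          calc Real.sinh (c*y) * |k y| ≤ (Real.exp (c*y)/2) * (c*ε/4) :=
              mul_le_mul (hsinhle _) (hA y hyA) (abs_nonneg _) (by positivity)
            _ = Real.exp (c*y) * (c*ε/8) := by ring
        have h3 : ∫ y in A..x, Real.exp (c*y) * (c*ε/8)
            = (Real.exp (c*x) - Real.exp (c*A)) * (ε/8) := by
          rw [intervalIntegral.integral_mul_const, hexpint]
          field_simp
        rw [← Real.norm_eq_abs]
        calc ‖∫ y in A..x, Real.sinh (c*y) * k y‖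
            ≤ ∫ y in A..x, ‖Real.sinh (c*y) * k y‖ := h1
          _ ≤ ∫ y in A..x, Real.exp (c*y) * (c*ε/8) := h2
          _ = (Real.exp (c*x) - Real.exp (c*A)) * (ε/8) := h3
      have hFabs : |F x| ≤ C + (Real.exp (c*x) - Real.exp (c*A)) * (ε/8) := by
        rw [hsplitF]
        calc |F A + ∫ y in A..x, Real.sinh (c*y) * k y|
            ≤ |F A| + |∫ y in A..x, Real.sinh (c*y) * k y| := abs_add_le _ _
          _ ≤ C + (Real.exp (c*x) - Real.exp (c*A)) * (ε/8) := by
              rw [hCdef]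
              exact add_le_add le_rfl hIbound
      have hee : Real.exp (-(c*x)) * Real.exp (c*x) = 1 := by
        rw [← Real.exp_add]; simp
      have hx0 : (0:ℝ) ≤ x := hA0.trans hx
      have hexpAx : 0 ≤ Real.exp (-(c*x)) * Real.exp (c*A) := by positivity
      calc |Real.exp (-(c*x)) * F x| = Real.exp (-(c*x)) * |F x| := by
            rw [abs_mul, abs_of_pos (Real.exp_pos _)]
        _ ≤ Real.exp (-(c*x)) * (C + (Real.exp (c*x) - Real.exp (c*A)) * (ε/8)) :=
            mul_le_mul_of_nonneg_left hFabs (Real.exp_pos _).le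
        _ = Real.exp (-(c*x)) * C
            + (Real.exp (-(c*x)) * Real.exp (c*x)) * (ε/8)
            - (Real.exp (-(c*x)) * Real.exp (c*A)) * (ε/8) := by ring
        _ ≤ Real.exp (-(c*x)) * C + ε/8 := by
            rw [hee, one_mul]
            have h5 : 0 ≤ (Real.exp (-(c*x)) * Real.exp (c*A)) * (ε/8) := by positivity
            linarith
        _ < ε := by
            have h6 : Real.exp (-(c*x)) * C ≤ |Real.exp (-(c*x)) * C| := le_abs_self _
            linarith
    have hcomb := (t1.add t2).const_mul (2/c)
    have hz : (2/c) * ((0:ℝ) + 0) = 0 := by ring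
    rw [hz] at hcomb
    apply Tendsto.congr' ?_ hcomb
    filter_upwards [eventually_gt_atTop (0:ℝ)] with x hx
    exact (hdecomp x hx).symm
  · -- slope at 0
    have hT : T = ∫ y in Set.Ioi (0:ℝ), Real.exp (-(c*y)) * h y := by
      rw [hTdef]
      apply setIntegral_congr_fun measurableSet_Ioi
      intro y hy
      show Real.exp (-(c*y)) * k y = Real.exp (-(c*y)) * h y
      rw [hkeq y hy]
    have hFder : HasDerivAt F 0 0 := by
      have := intervalIntegral.integral_hasDerivAt_right
        (hfc.intervalIntegrable 0 0)
        (hfc.stronglyMeasurableAtFilter volume (𝓝 0))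
        hfc.continuousAt
      simpa [hFdef] using this
    have hFslope : Tendsto (fun x => F x / x) (𝓝[≠] (0:ℝ)) (𝓝 0) := by
      have := hasDerivAt_iff_tendsto_slope.1 hFder
      apply this.congr
      intro x
      simp [slope_fun_def, hF0, div_eq_inv_mul]
    have hSder : HasDerivAt (fun x => Real.sinh (c*x)) c 0 := by
      have h1 : HasDerivAt (fun x : ℝ => c * x) c 0 := by
        simpa using (hasDerivAt_id (0:ℝ)).const_mul c
      simpa using h1.sinh
    have hSslope : Tendsto (fun x => Real.sinh (c*x) / x) (𝓝[≠] (0:ℝ)) (𝓝 c) := by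
      have := hasDerivAt_iff_tendsto_slope.1 hSder
      apply this.congr
      intro x
      simp [slope_fun_def, div_eq_inv_mul]
    have hsub : 𝓝[Set.Ioi (0:ℝ)] (0:ℝ) ≤ 𝓝[≠] (0:ℝ) :=
      nhdsWithin_mono 0 (fun x hx => ne_of_gt hx)
    have hgoal : Tendsto (fun x => (2/c) * (Real.exp (-(c*x)) * (F x / x)
        + (Real.sinh (c*x)/x) * (T - E x))) (𝓝[Set.Ioi (0:ℝ)] 0) (𝓝 ((2/c) * (1 * 0 + c * T))) := by
      have h1 : Tendsto (fun x : ℝ => Real.exp (-(c*x))) (𝓝[Set.Ioi (0:ℝ)] 0) (𝓝 1) := by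
        have hco : Continuous fun x : ℝ => Real.exp (-(c*x)) := by fun_prop
        have := (hco.tendsto 0).mono_left
          (nhdsWithin_le_nhds : 𝓝[Set.Ioi (0:ℝ)] 0 ≤ 𝓝 0)
        simpa using this
      have h4 : Tendsto (fun x => T - E x) (𝓝[Set.Ioi (0:ℝ)] 0) (𝓝 T) := by
        have := ((hcontE.tendsto 0).const_sub T).mono_left
          (nhdsWithin_le_nhds : 𝓝[Set.Ioi (0:ℝ)] 0 ≤ 𝓝 0)
        simpa [hE0] using this
      exact (((h1.mul (hFslope.mono_left hsub)).add
        ((hSslope.mono_left hsub).mul h4)).const_mul (2/c))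
    have heq : (2/c) * (1 * 0 + c * T) = 2 * T := by field_simp; ring
    rw [heq] at hgoal
    rw [← hT]
    refine Tendsto.congr' ?_ hgoal
    filter_upwards [self_mem_nhdsWithin] with x hx
    rw [hφG x hx, hφdef]
    ring
end

section
/- Let α > 0, h ∈ C₀([0,∞)), c ∈ ℝ, and define f(x) := G⁰_α h(x) + c·e^{−√(2α)x} for x > 0. Then f is twice differentiable on (0,∞) with f''(x) = 2α·G⁰_α h(x) − 2h(x) + 2αc·e^{−√(2α)x} for all x > 0, and the one-sided limits exist with lim_{x→0⁺} f'(x) = 2·∫₀^∞ h(y)·e^{−√(2α)y} dy − √(2α)·c and lim_{x→0⁺} f''(x) = −2h(0) + 2αc. -/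
open MeasureTheory Real Filter Topology

namespace Stmt4Aux
open Set

noncomputable def AA (β : ℝ) (h : ℝ → ℝ) (x : ℝ) : ℝ :=
  ∫ y in (0:ℝ)..x, Real.sinh (β * y) * h y

noncomputable def CC (β : ℝ) (h : ℝ → ℝ) (x : ℝ) : ℝ :=
  ∫ y in (0:ℝ)..x, Real.exp (-(β * y)) * h y

noncomputable def BB (β : ℝ) (h : ℝ → ℝ) : ℝ :=
  ∫ y in Set.Ioi (0:ℝ), Real.exp (-(β * y)) * h y

lemma memC0_bound {h : ℝ → ℝ} (hh : MemC0 h) :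
    ∃ M : ℝ, 0 ≤ M ∧ ∀ y : ℝ, 0 ≤ y → |h y| ≤ M := by
  obtain ⟨N, hN⟩ := (Metric.tendsto_atTop.mp hh.2 1 one_pos)
  obtain ⟨M₀, hM₀⟩ := (isCompact_Icc (a := (0:ℝ)) (b := max N 0)).exists_bound_of_continuousOn
    (hh.1.mono (fun y hy => hy.1))
  refine ⟨max M₀ 1, le_max_of_le_right zero_le_one, fun y hy => ?_⟩
  rcases le_total y (max N 0) with hc | hc
  · exact le_trans (by simpa using hM₀ y ⟨hy, hc⟩) (le_max_left _ _)
  · have := hN y (le_trans (le_max_left _ _) hc)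
    rw [dist_zero_right, Real.norm_eq_abs] at this
    exact le_trans this.le (le_max_right _ _)

lemma integrable_exp_h {β : ℝ} (hβ : 0 < β) {h : ℝ → ℝ} {M : ℝ}
    (hcont : ContinuousOn h (Set.Ici 0)) (hM : ∀ y : ℝ, 0 ≤ y → |h y| ≤ M) :
    IntegrableOn (fun y => Real.exp (-(β * y)) * h y) (Set.Ioi (0:ℝ)) := by
  have hexp : IntegrableOn (fun y : ℝ => M * Real.exp (-β * y)) (Set.Ioi (0:ℝ)) :=
    (exp_neg_integrableOn_Ioi 0 hβ).const_mul M
  apply Integrable.mono' hexp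
  · exact ((Real.continuous_exp.comp (continuous_const.mul continuous_id).neg).aestronglyMeasurable.restrict).mul
      ((hcont.mono Set.Ioi_subset_Ici_self).aestronglyMeasurable measurableSet_Ioi)
  · filter_upwards [ae_restrict_mem measurableSet_Ioi] with y hy
    rw [norm_mul, Real.norm_eq_abs, Real.norm_eq_abs, abs_of_pos (Real.exp_pos _), neg_mul]
    calc Real.exp (-(β * y)) * |h y| ≤ Real.exp (-(β * y)) * M := by
          exact mul_le_mul_of_nonneg_left (hM y (le_of_lt hy)) (Real.exp_pos _).le
      _ = M * Real.exp (-(β * y)) := mul_comm _ _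

lemma integrable_g0_h {α β : ℝ} (hβdef : Real.sqrt (2 * α) = β) (hβ : 0 < β)
    {h : ℝ → ℝ} {M : ℝ} (hcont : ContinuousOn h (Set.Ici 0))
    (hM : ∀ y : ℝ, 0 ≤ y → |h y| ≤ M) {x : ℝ} (hx : 0 < x) :
    IntegrableOn (fun y => g0 α x y * h y) (Set.Ioi (0:ℝ)) := by
  have hexp : IntegrableOn (fun y : ℝ => (2 / β * Real.sinh (β * x) * M) * Real.exp (-β * y))
      (Set.Ioi (0:ℝ)) := (exp_neg_integrableOn_Ioi 0 hβ).const_mul _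
  apply Integrable.mono' hexp
  · have hg : Continuous (fun y => g0 α x y) := by
      unfold g0
      exact ((continuous_const.mul (Real.continuous_sinh.comp
        (continuous_const.mul (continuous_const.min continuous_id)))).mul
        (Real.continuous_exp.comp ((continuous_const.mul (continuous_const.max continuous_id)).neg)))
    exact hg.aestronglyMeasurable.restrict.mul
      ((hcont.mono Set.Ioi_subset_Ici_self).aestronglyMeasurable measurableSet_Ioi)
  · filter_upwards [ae_restrict_mem measurableSet_Ioi] with y hy
    have hy0 : (0:ℝ) < y := hy
    have hmin : 0 ≤ min x y := le_min hx.le hy0.le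
    have hg0nn : 0 ≤ g0 α x y := by
      unfold g0
      rw [hβdef]
      have : 0 ≤ Real.sinh (β * min x y) := Real.sinh_nonneg_iff.mpr (by positivity)
      positivity
    rw [norm_mul, Real.norm_eq_abs, Real.norm_eq_abs, abs_of_nonneg hg0nn, neg_mul]
    have h1 : g0 α x y ≤ 2 / β * Real.sinh (β * x) * Real.exp (-(β * y)) := by
      unfold g0
      rw [hβdef]
      have hs : Real.sinh (β * min x y) ≤ Real.sinh (β * x) :=
        Real.sinh_le_sinh.mpr (mul_le_mul_of_nonneg_left (min_le_left _ _) hβ.le)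
      have he : Real.exp (-(β * max x y)) ≤ Real.exp (-(β * y)) :=
        Real.exp_le_exp.mpr (neg_le_neg (mul_le_mul_of_nonneg_left (le_max_right _ _) hβ.le))
      have hsx : 0 ≤ Real.sinh (β * x) := Real.sinh_nonneg_iff.mpr (by positivity)
      have hsmin : 0 ≤ Real.sinh (β * min x y) := Real.sinh_nonneg_iff.mpr (by positivity)
      have h2β : (0:ℝ) ≤ 2 / β := by positivity
      calc 2 / β * Real.sinh (β * min x y) * Real.exp (-(β * max x y))
          ≤ 2 / β * Real.sinh (β * x) * Real.exp (-(β * max x y)) := by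
            apply mul_le_mul_of_nonneg_right _ (Real.exp_pos _).le
            exact mul_le_mul_of_nonneg_left hs h2β
        _ ≤ 2 / β * Real.sinh (β * x) * Real.exp (-(β * y)) := by
            exact mul_le_mul_of_nonneg_left he (by positivity)
    have h2 : |h y| ≤ M := hM y hy0.le
    have hMnn : (0:ℝ) ≤ M := le_trans (abs_nonneg _) h2
    calc g0 α x y * |h y| ≤ (2 / β * Real.sinh (β * x) * Real.exp (-(β * y))) * M :=
          mul_le_mul h1 h2 (abs_nonneg _) (by positivity)
      _ = 2 / β * Real.sinh (β * x) * M * Real.exp (-(β * y)) := by ring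


lemma BB_split {β : ℝ} (hβ : 0 < β) {h : ℝ → ℝ} {M : ℝ}
    (hcont : ContinuousOn h (Set.Ici 0)) (hM : ∀ y : ℝ, 0 ≤ y → |h y| ≤ M) {x : ℝ} (hx : 0 < x) :
    ∫ y in Set.Ioi x, Real.exp (-(β * y)) * h y = BB β h - CC β h x := by
  have hInt := integrable_exp_h hβ hcont hM
  have hun : Set.Ioc 0 x ∪ Set.Ioi x = Set.Ioi (0:ℝ) := Set.Ioc_union_Ioi_eq_Ioi hx.le
  have key : BB β h = CC β h x + ∫ y in Set.Ioi x, Real.exp (-(β * y)) * h y := by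
    rw [BB, ← hun, setIntegral_union Set.Ioc_disjoint_Ioi_same measurableSet_Ioi
      (hInt.mono_set (hun ▸ Set.subset_union_left))
      (hInt.mono_set (hun ▸ Set.subset_union_right))]
    congr 1
    rw [CC, intervalIntegral.integral_of_le hx.le]
  linarith [key]

lemma G0_split {α β : ℝ} (hβdef : Real.sqrt (2 * α) = β) (hβ : 0 < β)
    {h : ℝ → ℝ} {M : ℝ} (hcont : ContinuousOn h (Set.Ici 0))
    (hM : ∀ y : ℝ, 0 ≤ y → |h y| ≤ M) {x : ℝ} (hx : 0 < x) :
    G0 α h x = 2 / β * Real.exp (-(β * x)) * AA β h x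
      + 2 / β * Real.sinh (β * x) * (BB β h - CC β h x) := by
  have hIntg := integrable_g0_h hβdef hβ hcont hM hx
  have hun : Set.Ioc 0 x ∪ Set.Ioi x = Set.Ioi (0:ℝ) := Set.Ioc_union_Ioi_eq_Ioi hx.le
  have e1 : ∫ y in Set.Ioc 0 x, g0 α x y * h y
      = 2 / β * Real.exp (-(β * x)) * AA β h x := by
    rw [setIntegral_congr_fun measurableSet_Ioc
      (g := fun y => (2 / β * Real.exp (-(β * x))) * (Real.sinh (β * y) * h y))
      (fun y hy => by
        simp only [g0, hβdef, min_eq_right hy.2, max_eq_left hy.2]; ring)]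
    rw [integral_const_mul, AA, intervalIntegral.integral_of_le hx.le]
  have e2 : ∫ y in Set.Ioi x, g0 α x y * h y
      = 2 / β * Real.sinh (β * x) * (BB β h - CC β h x) := by
    rw [setIntegral_congr_fun measurableSet_Ioi
      (g := fun y => (2 / β * Real.sinh (β * x)) * (Real.exp (-(β * y)) * h y))
      (fun y hy => by
        simp only [g0, hβdef, min_eq_left (le_of_lt (Set.mem_Ioi.mp hy)), max_eq_right (le_of_lt (Set.mem_Ioi.mp hy))]
        ring)]
    rw [integral_const_mul, BB_split hβ hcont hM hx]
  rw [G0, ← hun, setIntegral_union Set.Ioc_disjoint_Ioi_same measurableSet_Ioi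
    (hIntg.mono_set (hun ▸ Set.subset_union_left))
    (hIntg.mono_set (hun ▸ Set.subset_union_right)), e1, e2]

lemma ftc {g : ℝ → ℝ} (hg : ContinuousOn g (Set.Ici 0)) {x : ℝ} (hx : 0 < x) :
    HasDerivAt (fun u => ∫ y in (0:ℝ)..u, g y) (g x) x := by
  apply intervalIntegral.integral_hasDerivAt_right
  · apply ContinuousOn.intervalIntegrable
    apply hg.mono
    rw [Set.uIcc_of_le hx.le]
    exact Set.Icc_subset_Ici_self
  · exact ContinuousOn.stronglyMeasurableAtFilter isOpen_Ioi
      (hg.mono Set.Ioi_subset_Ici_self) x hx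
  · exact (hg.mono Set.Ioi_subset_Ici_self).continuousAt (Ioi_mem_nhds hx)


noncomputable def F0 (β : ℝ) (h : ℝ → ℝ) (c x : ℝ) : ℝ :=
  2 / β * Real.exp (-(β * x)) * AA β h x + 2 / β * Real.sinh (β * x) * (BB β h - CC β h x)
    + c * Real.exp (-(β * x))

noncomputable def F1 (β : ℝ) (h : ℝ → ℝ) (c x : ℝ) : ℝ :=
  -2 * Real.exp (-(β * x)) * AA β h x + 2 * Real.cosh (β * x) * (BB β h - CC β h x)
    - β * c * Real.exp (-(β * x))

noncomputable def F2 (β : ℝ) (h : ℝ → ℝ) (c x : ℝ) : ℝ :=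
  2 * β * Real.exp (-(β * x)) * AA β h x + 2 * β * Real.sinh (β * x) * (BB β h - CC β h x)
    - 2 * h x + β ^ 2 * c * Real.exp (-(β * x))

variable {β : ℝ} {h : ℝ → ℝ}

lemma hasDerivAt_AA (hβ : 0 < β) (hcont : ContinuousOn h (Set.Ici 0)) {x : ℝ} (hx : 0 < x) :
    HasDerivAt (AA β h) (Real.sinh (β * x) * h x) x :=
  ftc (((Real.continuous_sinh.comp (continuous_const.mul continuous_id)).continuousOn).mul hcont) hx

lemma hasDerivAt_CC (hβ : 0 < β) (hcont : ContinuousOn h (Set.Ici 0)) {x : ℝ} (hx : 0 < x) :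
    HasDerivAt (CC β h) (Real.exp (-(β * x)) * h x) x :=
  ftc (((Real.continuous_exp.comp (continuous_const.mul continuous_id).neg).continuousOn).mul hcont) hx
lemma hasDerivAt_exp' (β x : ℝ) :
    HasDerivAt (fun x => Real.exp (-(β * x))) (-β * Real.exp (-(β * x))) x := by
  have := (((hasDerivAt_id x).const_mul β).neg).exp
  simpa [mul_comm] using this

lemma hasDerivAt_sinh' (β x : ℝ) :
    HasDerivAt (fun x => Real.sinh (β * x)) (β * Real.cosh (β * x)) x := by
  have := ((hasDerivAt_id x).const_mul β).sinh
  simpa [mul_comm] using this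

lemma hasDerivAt_cosh' (β x : ℝ) :
    HasDerivAt (fun x => Real.cosh (β * x)) (β * Real.sinh (β * x)) x := by
  have := ((hasDerivAt_id x).const_mul β).cosh
  simpa [mul_comm] using this

lemma hasDerivAt_F0 (hβ : 0 < β) (hcont : ContinuousOn h (Set.Ici 0)) (c : ℝ)
    {x : ℝ} (hx : 0 < x) :
    HasDerivAt (F0 β h c) (F1 β h c x) x := by
  have t1 := ((hasDerivAt_exp' β x).const_mul (2/β)).mul (hasDerivAt_AA hβ hcont hx)
  have t2 := ((hasDerivAt_sinh' β x).const_mul (2/β)).mul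
    ((hasDerivAt_CC hβ hcont hx).const_sub (BB β h))
  have t3 := (hasDerivAt_exp' β x).const_mul c
  have total := (t1.add t2).add t3
  have : HasDerivAt (F0 β h c) (2/β * (-β * Real.exp (-(β * x))) * AA β h x
      + 2/β * Real.exp (-(β * x)) * (Real.sinh (β * x) * h x)
      + (2/β * (β * Real.cosh (β * x)) * (BB β h - CC β h x)
        + 2/β * Real.sinh (β * x) * -(Real.exp (-(β * x)) * h x))
      + c * (-β * Real.exp (-(β * x)))) x := by
    unfold F0
    refine total.congr_of_eventuallyEq (Filter.Eventually.of_forall fun y => ?_)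
    simp only [Pi.add_apply, Pi.mul_apply]
  convert this using 1
  unfold F1
  field_simp
  ring

lemma hasDerivAt_F1 {α : ℝ} (hβdef : Real.sqrt (2 * α) = β) (hβ : 0 < β)
    (hcont : ContinuousOn h (Set.Ici 0)) (c : ℝ) {x : ℝ} (hx : 0 < x) :
    HasDerivAt (F1 β h c) (F2 β h c x) x := by
  have t1 := ((hasDerivAt_exp' β x).const_mul (-2)).mul (hasDerivAt_AA hβ hcont hx)
  have t2 := ((hasDerivAt_cosh' β x).const_mul 2).mul
    ((hasDerivAt_CC hβ hcont hx).const_sub (BB β h))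
  have t3 := (hasDerivAt_exp' β x).const_mul (β * c)
  have total := (t1.add t2).sub t3
  have key : Real.exp (-(β * x)) * (Real.sinh (β * x) + Real.cosh (β * x)) = 1 := by
    rw [Real.sinh_add_cosh, ← Real.exp_add]
    simp
  have raw : HasDerivAt (F1 β h c) (-2 * (-β * Real.exp (-(β * x))) * AA β h x
      + -2 * Real.exp (-(β * x)) * (Real.sinh (β * x) * h x)
      + (2 * (β * Real.sinh (β * x)) * (BB β h - CC β h x)
        + 2 * Real.cosh (β * x) * -(Real.exp (-(β * x)) * h x))
      - β * c * (-β * Real.exp (-(β * x)))) x := by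
    unfold F1
    refine total.congr_of_eventuallyEq (Filter.Eventually.of_forall fun y => ?_)
    simp only [Pi.add_apply, Pi.sub_apply, Pi.mul_apply]
  convert raw using 1
  unfold F2
  linear_combination (2 * h x) * key


lemma tendsto_AA (hβ : 0 < β) {M : ℝ} (hM : ∀ y : ℝ, 0 ≤ y → |h y| ≤ M) :
    Tendsto (AA β h) (𝓝[>] (0:ℝ)) (𝓝 0) := by
  have hMn : 0 ≤ M := le_trans (abs_nonneg _) (hM 0 le_rfl)
  apply squeeze_zero_norm' (a := fun x => (Real.sinh β * M) * |x|)
  · filter_upwards [Ioc_mem_nhdsGT (zero_lt_one)] with x hx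
    have : ‖AA β h x‖ ≤ (Real.sinh β * M) * |x - 0| := by
      apply intervalIntegral.norm_integral_le_of_norm_le_const
      intro y hy
      rw [Set.uIoc_of_le hx.1.le] at hy
      rw [norm_mul, Real.norm_eq_abs, Real.norm_eq_abs]
      have h1 : |Real.sinh (β * y)| = Real.sinh (β * y) :=
        abs_of_nonneg (Real.sinh_nonneg_iff.mpr (mul_nonneg hβ.le hy.1.le))
      rw [h1]
      have h2 : Real.sinh (β * y) ≤ Real.sinh β := by
        apply Real.sinh_le_sinh.mpr
        calc β * y ≤ β * 1 := mul_le_mul_of_nonneg_left (hy.2.trans hx.2) hβ.le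
          _ = β := mul_one β
      exact mul_le_mul h2 (hM y hy.1.le) (abs_nonneg _)
        (le_trans (Real.sinh_nonneg_iff.mpr (mul_nonneg hβ.le hy.1.le)) h2)
    simpa using this
  · have : Tendsto (fun x : ℝ => (Real.sinh β * M) * |x|) (𝓝 0) (𝓝 0) := by
      have := (continuous_const.mul continuous_abs : Continuous fun x : ℝ => (Real.sinh β * M) * |x|).tendsto 0
      simpa [Pi.mul_def] using this
    exact this.mono_left nhdsWithin_le_nhds

lemma tendsto_CC (hβ : 0 < β) {M : ℝ} (hM : ∀ y : ℝ, 0 ≤ y → |h y| ≤ M) :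
    Tendsto (CC β h) (𝓝[>] (0:ℝ)) (𝓝 0) := by
  have hMn : 0 ≤ M := le_trans (abs_nonneg _) (hM 0 le_rfl)
  apply squeeze_zero_norm' (a := fun x => M * |x|)
  · filter_upwards [Ioc_mem_nhdsGT (zero_lt_one)] with x hx
    have : ‖CC β h x‖ ≤ M * |x - 0| := by
      apply intervalIntegral.norm_integral_le_of_norm_le_const
      intro y hy
      rw [Set.uIoc_of_le hx.1.le] at hy
      rw [norm_mul, Real.norm_eq_abs, Real.norm_eq_abs, abs_of_pos (Real.exp_pos _)]
      have h1 : Real.exp (-(β * y)) ≤ 1 := Real.exp_le_one_iff.mpr (by nlinarith [hy.1])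
      calc Real.exp (-(β * y)) * |h y| ≤ 1 * M :=
            mul_le_mul h1 (hM y hy.1.le) (abs_nonneg _) zero_le_one
        _ = M := one_mul M
    simpa using this
  · have : Tendsto (fun x : ℝ => M * |x|) (𝓝 0) (𝓝 0) := by
      have := (continuous_const.mul continuous_abs : Continuous fun x : ℝ => M * |x|).tendsto 0
      simpa [Pi.mul_def] using this
    exact this.mono_left nhdsWithin_le_nhds

end Stmt4Aux

open Stmt4Aux Set in
/-- For `α > 0`, `h ∈ C₀([0,∞))`, `c ∈ ℝ` and `f(x) = G⁰_α h(x) + c·e^{−√(2α)x}`: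
`f` is twice differentiable on `(0,∞)` with
`f''(x) = 2α·G⁰_α h(x) − 2h(x) + 2αc·e^{−√(2α)x}`, and the one-sided limits at `0⁺`
of `f'` and `f''` are `2·∫₀^∞ h(y)e^{−√(2α)y} dy − √(2α)·c` and `−2h(0) + 2αc`. -/
theorem stmt4 (α : ℝ) (hα : 0 < α) (h : ℝ → ℝ) (hh : MemC0 h) (c : ℝ)
    (f : ℝ → ℝ)
    (hf : ∀ x, f x = G0 α h x + c * Real.exp (-(Real.sqrt (2 * α) * x))) :
    (∀ x ∈ Set.Ioi (0 : ℝ),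
      DifferentiableAt ℝ f x ∧ DifferentiableAt ℝ (deriv f) x ∧
        deriv (deriv f) x =
          2 * α * G0 α h x - 2 * h x +
            2 * α * c * Real.exp (-(Real.sqrt (2 * α) * x))) ∧
    Filter.Tendsto (deriv f) (nhdsWithin 0 (Set.Ioi 0))
      (nhds (2 * (∫ y in Set.Ioi (0 : ℝ), h y * Real.exp (-(Real.sqrt (2 * α) * y))) -
        Real.sqrt (2 * α) * c)) ∧
    Filter.Tendsto (deriv (deriv f)) (nhdsWithin 0 (Set.Ioi 0))
      (nhds (-2 * h 0 + 2 * α * c)) := by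
  set β := Real.sqrt (2 * α) with hβd
  have hβdef : Real.sqrt (2 * α) = β := rfl
  have hβ : 0 < β := Real.sqrt_pos.mpr (by linarith)
  have hsq : β ^ 2 = 2 * α := Real.sq_sqrt (by linarith)
  obtain ⟨M, hMn, hM⟩ := memC0_bound hh
  have hcont := hh.1
  -- f agrees with F0 near every x > 0
  have hfF : ∀ x : ℝ, 0 < x → f =ᶠ[𝓝 x] F0 β h c := by
    intro x hx
    filter_upwards [Ioi_mem_nhds hx] with y hy
    rw [hf y, F0, G0_split hβdef hβ hcont hM hy]
  have hd1 : ∀ x : ℝ, 0 < x → HasDerivAt f (F1 β h c x) x := fun x hx =>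
    (hasDerivAt_F0 hβ hcont c hx).congr_of_eventuallyEq (hfF x hx)
  have hderiv1 : ∀ x : ℝ, 0 < x → deriv f x = F1 β h c x := fun x hx => (hd1 x hx).deriv
  have hd2 : ∀ x : ℝ, 0 < x → HasDerivAt (deriv f) (F2 β h c x) x := by
    intro x hx
    apply (hasDerivAt_F1 hβdef hβ hcont c hx).congr_of_eventuallyEq
    filter_upwards [Ioi_mem_nhds hx] with y hy
    exact hderiv1 y hy
  -- limit ingredients
  have te : Tendsto (fun x : ℝ => Real.exp (-(β * x))) (𝓝[>] (0:ℝ)) (𝓝 1) := by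
    refine Tendsto.mono_left ?_ nhdsWithin_le_nhds
    have hc : Continuous fun x : ℝ => Real.exp (-(β * x)) :=
      Real.continuous_exp.comp (continuous_const.mul continuous_id).neg
    simpa using hc.tendsto 0
  have tsinh : Tendsto (fun x : ℝ => Real.sinh (β * x)) (𝓝[>] (0:ℝ)) (𝓝 0) := by
    refine Tendsto.mono_left ?_ nhdsWithin_le_nhds
    have hc : Continuous fun x : ℝ => Real.sinh (β * x) :=
      Real.continuous_sinh.comp (continuous_const.mul continuous_id)
    simpa using hc.tendsto 0
  have tcosh : Tendsto (fun x : ℝ => Real.cosh (β * x)) (𝓝[>] (0:ℝ)) (𝓝 1) := by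
    refine Tendsto.mono_left ?_ nhdsWithin_le_nhds
    have hc : Continuous fun x : ℝ => Real.cosh (β * x) :=
      Real.continuous_cosh.comp (continuous_const.mul continuous_id)
    simpa using hc.tendsto 0
  have th : Tendsto h (𝓝[>] (0:ℝ)) (𝓝 (h 0)) :=
    (hh.1 0 (Set.mem_Ici.mpr le_rfl)).mono_left (nhdsWithin_mono 0 Set.Ioi_subset_Ici_self)
  have tA := tendsto_AA hβ hM
  have tC := tendsto_CC hβ hM
  have hBB : BB β h = ∫ y in Set.Ioi (0:ℝ), h y * Real.exp (-(β * y)) :=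
    setIntegral_congr_fun measurableSet_Ioi (fun y _ => mul_comm _ _)
  refine ⟨fun x hx => ?_, ?_, ?_⟩
  · have hx' : 0 < x := hx
    refine ⟨(hd1 x hx').differentiableAt, (hd2 x hx').differentiableAt, ?_⟩
    rw [(hd2 x hx').deriv, F2, G0_split hβdef hβ hcont hM hx', ← hsq]
    field_simp
  · have hev : deriv f =ᶠ[𝓝[>] (0:ℝ)] F1 β h c :=
      eventually_nhdsWithin_of_forall (fun x hx => hderiv1 x hx)
    have TF1 : Tendsto (F1 β h c) (𝓝[>] (0:ℝ))
        (𝓝 (-2 * 1 * 0 + 2 * 1 * (BB β h - 0) - β * c * 1)) := by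
      unfold F1
      exact (((te.const_mul (-2)).mul tA).add
        ((tcosh.const_mul 2).mul (tendsto_const_nhds.sub tC))).sub (te.const_mul (β * c))
    have hval : (2 * (∫ y in Set.Ioi (0:ℝ), h y * Real.exp (-(β * y))) - β * c)
        = -2 * 1 * 0 + 2 * 1 * (BB β h - 0) - β * c * 1 := by
      rw [hBB]; ring
    rw [hval]
    exact Filter.Tendsto.congr' hev.symm TF1
  · have hev2 : deriv (deriv f) =ᶠ[𝓝[>] (0:ℝ)] F2 β h c :=
      eventually_nhdsWithin_of_forall (fun x hx => (hd2 x hx).deriv)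
    have TF2 : Tendsto (F2 β h c) (𝓝[>] (0:ℝ))
        (𝓝 (2 * β * 1 * 0 + 2 * β * 0 * (BB β h - 0) - 2 * h 0 + β ^ 2 * c * 1)) := by
      unfold F2
      exact ((((te.const_mul (2 * β)).mul tA).add
        ((tsinh.const_mul (2 * β)).mul (tendsto_const_nhds.sub tC))).sub
        (th.const_mul 2)).add (te.const_mul (β ^ 2 * c))
    have hval : (-2 * h 0 + 2 * α * c)
        = 2 * β * 1 * 0 + 2 * β * 0 * (BB β h - 0) - 2 * h 0 + β ^ 2 * c * 1 := by
      rw [hsq]; ring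
    rw [hval]
    exact Filter.Tendsto.congr' hev2.symm TF2
end

section
/- Let (p₁,p₂,p₃,p₄) be an admissible quadruple, α > 0, h ∈ C₀([0,∞)), c ∈ ℝ, and define f(0) := c and f(x) := G⁰_α h(x) + c·e^{−√(2α)x} for x > 0. Then x ↦ f(0) − f(x) is p₄-integrable on (0,∞), and the boundary identity p₁·f(0) − p₂·lim_{x→0⁺} f'(x) + (p₃/2)·lim_{x→0⁺} f''(x) + ∫_{(0,∞)} (f(0) − f(x)) p₄(dx) = 0 holds if and only if c·(p₁ + √(2α)·p₂ + α·p₃ + ∫_{(0,∞)}(1 − e^{−√(2α)x}) p₄(dx)) = 2p₂·∫₀^∞ e^{−√(2α)x}·h(x) dx + p₃·h(0) + ∫_{(0,∞)} G⁰_α h(x) p₄(dx). -/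
open MeasureTheory Real Filter Topology

/-- An admissible quadruple `(p₁,p₂,p₃,p₄)`: `p₁,p₂,p₃ ≥ 0`, `p₄` a positive Borel
measure carried by `(0,∞)` with `∫ min(1,x) p₄(dx) < ∞`, normalized by
`p₁+p₂+p₃+∫ min(x,1) p₄(dx) = 1`, and `|p₄| = ∞` whenever `p₂ = p₃ = 0`. -/
def IsAdmissible (p₁ p₂ p₃ : ℝ) (p₄ : Measure ℝ) : Prop :=
  0 ≤ p₁ ∧ 0 ≤ p₂ ∧ 0 ≤ p₃ ∧ p₄ (Set.Iic 0) = 0 ∧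
  (∫⁻ x in Set.Ioi (0 : ℝ), ENNReal.ofReal (min 1 x) ∂p₄) < ⊤ ∧
  p₁ + p₂ + p₃ + (∫ x in Set.Ioi (0 : ℝ), min x 1 ∂p₄) = 1 ∧
  (p₂ = 0 ∧ p₃ = 0 → p₄ (Set.Ioi 0) = ⊤)

/-! ### Auxiliary definitions and lemmas -/

noncomputable def Afun (β : ℝ) (h : ℝ → ℝ) (x : ℝ) : ℝ :=
  ∫ y in Set.Ioi x, Real.exp (-(β * y)) * h y

noncomputable def Bfun (β : ℝ) (h : ℝ → ℝ) (x : ℝ) : ℝ :=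
  ∫ y in Set.Ioc 0 x, Real.sinh (β * y) * h y

noncomputable def Ffun (β c : ℝ) (h : ℝ → ℝ) (x : ℝ) : ℝ :=
  (2 / β) * (Real.sinh (β * x) * Afun β h x + Real.exp (-(β * x)) * Bfun β h x) +
    c * Real.exp (-(β * x))

noncomputable def F1fun (β c : ℝ) (h : ℝ → ℝ) (x : ℝ) : ℝ :=
  2 * Real.cosh (β * x) * Afun β h x - 2 * Real.exp (-(β * x)) * Bfun β h x -
    c * β * Real.exp (-(β * x))

noncomputable def F2fun (β c : ℝ) (h : ℝ → ℝ) (x : ℝ) : ℝ :=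
  2 * β * Real.sinh (β * x) * Afun β h x + 2 * β * Real.exp (-(β * x)) * Bfun β h x -
    2 * h x + c * β ^ 2 * Real.exp (-(β * x))

lemma memC0_bound {h : ℝ → ℝ} (hh : MemC0 h) :
    ∃ M : ℝ, 0 ≤ M ∧ ∀ y ∈ Set.Ici (0 : ℝ), |h y| ≤ M := by
  have h1 : ∀ᶠ x in atTop, |h x| < 1 := by
    have := hh.2
    rw [Metric.tendsto_atTop] at this
    obtain ⟨N, hN⟩ := this 1 one_pos
    filter_upwards [eventually_ge_atTop N] with x hx
    simpa [Real.dist_eq] using hN x hx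
  obtain ⟨N, hN⟩ := h1.exists_forall_of_atTop
  obtain ⟨C, hC⟩ := (isCompact_Icc (a := (0:ℝ)) (b := max N 0)).exists_bound_of_continuousOn
    (hh.1.mono (by intro y hy; exact hy.1))
  refine ⟨max C 1, le_trans zero_le_one (le_max_right _ _), fun y hy => ?_⟩
  rcases le_or_gt y (max N 0) with hy' | hy'
  · exact le_trans (by simpa using hC y ⟨hy, hy'⟩) (le_max_left _ _)
  · exact le_trans (hN y (le_trans (le_max_left _ _) hy'.le)).le (le_max_right _ _)

section aux

variable {β M : ℝ} {h : ℝ → ℝ}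

lemma contE (hβ : 0 < β) (hcont : ContinuousOn h (Set.Ici 0)) :
    ContinuousOn (fun y => Real.exp (-(β * y)) * h y) (Set.Ici 0) :=
  ((Real.continuous_exp.comp (continuous_const.mul continuous_id).neg).continuousOn).mul hcont

lemma contS (hβ : 0 < β) (hcont : ContinuousOn h (Set.Ici 0)) :
    ContinuousOn (fun y => Real.sinh (β * y) * h y) (Set.Ici 0) :=
  ((Real.continuous_sinh.comp (continuous_const.mul continuous_id)).continuousOn).mul hcont

lemma intE (hβ : 0 < β) (hcont : ContinuousOn h (Set.Ici 0))
    (hM : ∀ y ∈ Set.Ici (0 : ℝ), |h y| ≤ M) {a : ℝ} (ha : 0 ≤ a) :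
    IntegrableOn (fun y => Real.exp (-(β * y)) * h y) (Set.Ioi a) := by
  have hg : IntegrableOn (fun y => M * Real.exp (-(β * y))) (Set.Ioi a) := by
    simpa [neg_mul, IntegrableOn] using (exp_neg_integrableOn_Ioi a hβ).const_mul M
  refine Integrable.mono' hg ?_ ?_
  · exact ((contE hβ hcont).mono fun y hy => le_trans ha (le_of_lt hy)).aestronglyMeasurable
      measurableSet_Ioi
  · filter_upwards [ae_restrict_mem measurableSet_Ioi] with y hy
    have : |h y| ≤ M := hM y (le_trans ha hy.le)
    rw [Real.norm_eq_abs, abs_mul, Real.abs_exp]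
    calc Real.exp (-(β * y)) * |h y| ≤ Real.exp (-(β * y)) * M := by
          exact mul_le_mul_of_nonneg_left this (Real.exp_pos _).le
      _ = M * Real.exp (-(β * y)) := mul_comm _ _

lemma intS (hβ : 0 < β) (hcont : ContinuousOn h (Set.Ici 0)) {x : ℝ} (hx : 0 ≤ x) :
    IntegrableOn (fun y => Real.sinh (β * y) * h y) (Set.Ioc 0 x) :=
  (((contS hβ hcont).mono (Set.Icc_subset_Ici_self)).integrableOn_Icc).mono_set
    Set.Ioc_subset_Icc_self

lemma integral_expβ_Ioi (hβ : 0 < β) (x : ℝ) :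
    ∫ y in Set.Ioi x, Real.exp (-(β * y)) = Real.exp (-(β * x)) / β := by
  have hderiv : ∀ y ∈ Set.Ici x, HasDerivAt (fun y => -Real.exp (-(β * y)) / β)
      (Real.exp (-(β * y))) y := by
    intro y _
    have h1 : HasDerivAt (fun y : ℝ => -(β * y)) (-β) y := by
      simpa [Pi.neg_def] using ((hasDerivAt_id y).const_mul β).neg
    have h2 := (h1.exp.neg).div_const β
    exact h2.congr_deriv (by field_simp)
  have hlim : Tendsto (fun y => -Real.exp (-(β * y)) / β) atTop (𝓝 0) := by
    have h1 : Tendsto (fun y : ℝ => -(β * y)) atTop atBot :=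
      tendsto_neg_atTop_atBot.comp (tendsto_id.const_mul_atTop hβ)
    have h2 := (Real.tendsto_exp_atBot.comp h1).neg.div_const β
    simpa using h2
  have hint : IntegrableOn (fun y => Real.exp (-(β * y))) (Set.Ioi x) := by
    simpa [neg_mul] using exp_neg_integrableOn_Ioi x hβ
  have := integral_Ioi_of_hasDerivAt_of_tendsto' hderiv hint hlim
  rw [this]
  ring

lemma integral_sinhβ_Ioc (hβ : 0 < β) {x : ℝ} (hx : 0 ≤ x) :
    ∫ y in Set.Ioc 0 x, Real.sinh (β * y) = (Real.cosh (β * x) - 1) / β := by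
  rw [← intervalIntegral.integral_of_le hx]
  have hderiv : ∀ y ∈ Set.uIcc 0 x, HasDerivAt (fun y => Real.cosh (β * y) / β)
      (Real.sinh (β * y)) y := by
    intro y _
    have h1 : HasDerivAt (fun y : ℝ => β * y) β y := by
      simpa using (hasDerivAt_id y).const_mul β
    have h2 := ((Real.hasDerivAt_cosh (β * y)).comp y h1).div_const β
    exact h2.congr_deriv (by field_simp)
  rw [intervalIntegral.integral_eq_sub_of_hasDerivAt hderiv
    ((Real.continuous_sinh.comp (continuous_const.mul continuous_id)).intervalIntegrable 0 x)]
  simp [Real.cosh_zero]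
  ring

lemma A_bound (hβ : 0 < β) (hcont : ContinuousOn h (Set.Ici 0))
    (hM : ∀ y ∈ Set.Ici (0 : ℝ), |h y| ≤ M) {x : ℝ} (hx : 0 ≤ x) :
    |Afun β h x| ≤ M * Real.exp (-(β * x)) / β := by
  have hg : IntegrableOn (fun y => M * Real.exp (-(β * y))) (Set.Ioi x) := by
    simpa [neg_mul, IntegrableOn] using (exp_neg_integrableOn_Ioi x hβ).const_mul M
  have := MeasureTheory.norm_integral_le_of_norm_le hg (f := fun y => Real.exp (-(β * y)) * h y) ?_
  · rw [Real.norm_eq_abs] at this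
    refine le_trans this ?_
    rw [MeasureTheory.integral_const_mul, integral_expβ_Ioi hβ]
    rw [mul_div_assoc]
  · filter_upwards [ae_restrict_mem measurableSet_Ioi] with y hy
    have : |h y| ≤ M := hM y (le_trans hx hy.le)
    rw [Real.norm_eq_abs, abs_mul, Real.abs_exp]
    calc Real.exp (-(β * y)) * |h y| ≤ Real.exp (-(β * y)) * M :=
          mul_le_mul_of_nonneg_left this (Real.exp_pos _).le
      _ = M * Real.exp (-(β * y)) := mul_comm _ _

lemma B_bound (hβ : 0 < β) (hcont : ContinuousOn h (Set.Ici 0))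
    (hM : ∀ y ∈ Set.Ici (0 : ℝ), |h y| ≤ M) {x : ℝ} (hx : 0 ≤ x) :
    |Bfun β h x| ≤ M * (Real.cosh (β * x) - 1) / β := by
  have hg : IntegrableOn (fun y => M * Real.sinh (β * y)) (Set.Ioc 0 x) := by
    have : IntegrableOn (fun y => M * Real.sinh (β * y)) (Set.Icc 0 x) :=
      ((Real.continuous_sinh.comp (continuous_const.mul continuous_id)).continuousOn.integrableOn_Icc
        (a := 0) (b := x)).const_mul M
    exact this.mono_set Set.Ioc_subset_Icc_self
  have := MeasureTheory.norm_integral_le_of_norm_le hg (f := fun y => Real.sinh (β * y) * h y) ?_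
  · rw [Real.norm_eq_abs] at this
    refine le_trans this ?_
    rw [MeasureTheory.integral_const_mul, integral_sinhβ_Ioc hβ hx, mul_div_assoc]
  · filter_upwards [ae_restrict_mem measurableSet_Ioc] with y hy
    have h1 : |h y| ≤ M := hM y hy.1.le
    have h2 : 0 ≤ Real.sinh (β * y) := Real.sinh_nonneg_iff.2 (mul_nonneg hβ.le hy.1.le)
    rw [Real.norm_eq_abs, abs_mul, abs_of_nonneg h2]
    calc Real.sinh (β * y) * |h y| ≤ Real.sinh (β * y) * M :=
          mul_le_mul_of_nonneg_left h1 h2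
      _ = M * Real.sinh (β * y) := mul_comm _ _

lemma A_split (hβ : 0 < β) (hcont : ContinuousOn h (Set.Ici 0))
    (hM : ∀ y ∈ Set.Ici (0 : ℝ), |h y| ≤ M) {x : ℝ} (hx : 0 ≤ x) :
    Afun β h 0 = (∫ y in Set.Ioc 0 x, Real.exp (-(β * y)) * h y) + Afun β h x := by
  rw [Afun, Afun, show Set.Ioi (0:ℝ) = Set.Ioc 0 x ∪ Set.Ioi x from
    (Set.Ioc_union_Ioi_eq_Ioi hx).symm,
    MeasureTheory.setIntegral_union Set.Ioc_disjoint_Ioi_same measurableSet_Ioi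
      ((intE hβ hcont hM le_rfl).mono_set Set.Ioc_subset_Ioi_self) (intE hβ hcont hM hx)]

lemma A_hasDeriv (hβ : 0 < β) (hcont : ContinuousOn h (Set.Ici 0))
    (hM : ∀ y ∈ Set.Ici (0 : ℝ), |h y| ≤ M) {x : ℝ} (hx : 0 < x) :
    HasDerivAt (Afun β h) (-(Real.exp (-(β * x)) * h x)) x := by
  have hEc : ContinuousOn (fun y => Real.exp (-(β * y)) * h y) (Set.Ioi 0) :=
    (contE hβ hcont).mono (fun y hy => hy.out.le)
  have key : HasDerivAt (fun u => ∫ t in (0:ℝ)..u, Real.exp (-(β * t)) * h t)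
      (Real.exp (-(β * x)) * h x) x := by
    refine intervalIntegral.integral_hasDerivAt_right ?_ ?_ ?_
    · rw [intervalIntegrable_iff_integrableOn_Ioc_of_le hx.le]
      exact (intE hβ hcont hM le_rfl).mono_set Set.Ioc_subset_Ioi_self
    · exact hEc.stronglyMeasurableAtFilter isOpen_Ioi x hx
    · exact hEc.continuousAt (Ioi_mem_nhds hx)
  have key2 := key.const_sub (Afun β h 0)
  refine key2.congr_of_eventuallyEq ?_
  filter_upwards [Ioi_mem_nhds hx] with u hu
  have := A_split hβ hcont hM (le_of_lt hu)
  rw [intervalIntegral.integral_of_le (le_of_lt hu)]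
  linarith

lemma B_hasDeriv (hβ : 0 < β) (hcont : ContinuousOn h (Set.Ici 0)) {x : ℝ} (hx : 0 < x) :
    HasDerivAt (Bfun β h) (Real.sinh (β * x) * h x) x := by
  have hSc : ContinuousOn (fun y => Real.sinh (β * y) * h y) (Set.Ioi 0) :=
    (contS hβ hcont).mono (fun y hy => hy.out.le)
  have key : HasDerivAt (fun u => ∫ t in (0:ℝ)..u, Real.sinh (β * t) * h t)
      (Real.sinh (β * x) * h x) x := by
    refine intervalIntegral.integral_hasDerivAt_right ?_ ?_ ?_
    · rw [intervalIntegrable_iff_integrableOn_Ioc_of_le hx.le]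
      exact intS hβ hcont hx.le
    · exact hSc.stronglyMeasurableAtFilter isOpen_Ioi x hx
    · exact hSc.continuousAt (Ioi_mem_nhds hx)
  refine key.congr_of_eventuallyEq ?_
  filter_upwards [Ioi_mem_nhds hx] with u hu
  rw [Bfun, intervalIntegral.integral_of_le (le_of_lt hu)]

lemma expβ_hasDeriv (β : ℝ) (x : ℝ) :
    HasDerivAt (fun x => Real.exp (-(β * x))) (-β * Real.exp (-(β * x))) x := by
  have h1 : HasDerivAt (fun y : ℝ => -(β * y)) (-β) x := by
    simpa [Pi.neg_def] using ((hasDerivAt_id x).const_mul β).neg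
  simpa [mul_comm] using h1.exp

lemma sinhβ_hasDeriv (β : ℝ) (x : ℝ) :
    HasDerivAt (fun x => Real.sinh (β * x)) (β * Real.cosh (β * x)) x := by
  have h1 : HasDerivAt (fun y : ℝ => β * y) β x := by
    simpa using (hasDerivAt_id x).const_mul β
  simpa [mul_comm, Function.comp_def] using (Real.hasDerivAt_sinh (β * x)).comp x h1

lemma coshβ_hasDeriv (β : ℝ) (x : ℝ) :
    HasDerivAt (fun x => Real.cosh (β * x)) (β * Real.sinh (β * x)) x := by
  have h1 : HasDerivAt (fun y : ℝ => β * y) β x := by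
    simpa using (hasDerivAt_id x).const_mul β
  simpa [mul_comm, Function.comp_def] using (Real.hasDerivAt_cosh (β * x)).comp x h1

lemma abs_AIoc_le (hβ : 0 < β) (hcont : ContinuousOn h (Set.Ici 0))
    (hM : ∀ y ∈ Set.Ici (0 : ℝ), |h y| ≤ M) {x : ℝ} (hx : 0 ≤ x) :
    |∫ y in Set.Ioc 0 x, Real.exp (-(β * y)) * h y| ≤ M * x := by
  have hg : IntegrableOn (fun _ : ℝ => M) (Set.Ioc 0 x) :=
    integrableOn_const measure_Ioc_lt_top.ne
  have hb := MeasureTheory.norm_integral_le_of_norm_le hg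
    (f := fun y => Real.exp (-(β * y)) * h y) ?_
  · rw [Real.norm_eq_abs] at hb
    refine hb.trans ?_
    rw [MeasureTheory.setIntegral_const, Real.volume_real_Ioc, smul_eq_mul, sub_zero,
      max_eq_left hx, mul_comm]
  · filter_upwards [ae_restrict_mem measurableSet_Ioc] with y hy
    have h1 : |h y| ≤ M := hM y hy.1.le
    have h2 : Real.exp (-(β * y)) ≤ 1 := by
      rw [← Real.exp_zero]
      exact Real.exp_le_exp.2 (neg_nonpos.2 (mul_nonneg hβ.le hy.1.le))
    rw [Real.norm_eq_abs, abs_mul, Real.abs_exp]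
    calc Real.exp (-(β * y)) * |h y| ≤ 1 * M :=
          mul_le_mul h2 h1 (abs_nonneg _) zero_le_one
      _ = M := one_mul M

lemma A_tendsto (hβ : 0 < β) (hcont : ContinuousOn h (Set.Ici 0))
    (hM : ∀ y ∈ Set.Ici (0 : ℝ), |h y| ≤ M) :
    Filter.Tendsto (Afun β h) (nhdsWithin 0 (Set.Ioi 0)) (nhds (Afun β h 0)) := by
  have key : Filter.Tendsto (fun x => Afun β h x - Afun β h 0)
      (nhdsWithin 0 (Set.Ioi 0)) (nhds 0) := by
    rw [tendsto_zero_iff_abs_tendsto_zero]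
    refine squeeze_zero' (g := fun x => M * x) (Eventually.of_forall fun x => abs_nonneg _) ?_ ?_
    · filter_upwards [self_mem_nhdsWithin] with x hx
      have h1 := A_split hβ hcont hM (le_of_lt hx)
      have h2 := abs_AIoc_le hβ hcont hM (le_of_lt hx)
      calc |Afun β h x - Afun β h 0|
          = |∫ y in Set.Ioc 0 x, Real.exp (-(β * y)) * h y| := by
            rw [abs_sub_comm, h1]; congr 1; ring
        _ ≤ M * x := h2
    · have : Filter.Tendsto (fun x : ℝ => M * x) (nhds (0:ℝ)) (nhds (M * 0)) :=
        (continuous_const.mul continuous_id).tendsto 0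
      simpa using this.mono_left nhdsWithin_le_nhds
  have := key.add_const (Afun β h 0)
  simpa using this

lemma B_tendsto (hβ : 0 < β) (hcont : ContinuousOn h (Set.Ici 0))
    (hM : ∀ y ∈ Set.Ici (0 : ℝ), |h y| ≤ M) :
    Filter.Tendsto (Bfun β h) (nhdsWithin 0 (Set.Ioi 0)) (nhds 0) := by
  rw [tendsto_zero_iff_abs_tendsto_zero]
  refine squeeze_zero' (g := fun x => M * (Real.cosh (β * x) - 1) / β)
    (Eventually.of_forall fun x => abs_nonneg _) ?_ ?_
  · filter_upwards [self_mem_nhdsWithin] with x hx using B_bound hβ hcont hM hx.le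
  · have hc : Continuous (fun x : ℝ => M * (Real.cosh (β * x) - 1) / β) :=
      (continuous_const.mul ((Real.continuous_cosh.comp
        (continuous_const.mul continuous_id)).sub continuous_const)).div_const β
    have := (hc.tendsto 0).mono_left (nhdsWithin_le_nhds (s := Set.Ioi (0:ℝ)))
    simpa using this

lemma F_hasDeriv (hβ : 0 < β) (hcont : ContinuousOn h (Set.Ici 0))
    (hM : ∀ y ∈ Set.Ici (0 : ℝ), |h y| ≤ M) (c : ℝ) {x : ℝ} (hx : 0 < x) :
    HasDerivAt (Ffun β c h) (F1fun β c h x) x := by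
  have hA := A_hasDeriv hβ hcont hM hx
  have hB := B_hasDeriv hβ hcont hx
  have hraw := ((((sinhβ_hasDeriv β x).mul hA).add
    ((expβ_hasDeriv β x).mul hB)).const_mul (2 / β)).add ((expβ_hasDeriv β x).const_mul c)
  have hfinal := hraw.congr_of_eventuallyEq (f₁ := Ffun β c h)
    (Filter.Eventually.of_forall fun y => by simp only [Ffun, Pi.add_apply, Pi.mul_apply])
  refine hfinal.congr_deriv ?_
  symm
  unfold F1fun
  field_simp
  ring

lemma F1_hasDeriv (hβ : 0 < β) (hcont : ContinuousOn h (Set.Ici 0))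
    (hM : ∀ y ∈ Set.Ici (0 : ℝ), |h y| ≤ M) (c : ℝ) {x : ℝ} (hx : 0 < x) :
    HasDerivAt (F1fun β c h) (F2fun β c h x) x := by
  have hA := A_hasDeriv hβ hcont hM hx
  have hB := B_hasDeriv hβ hcont hx
  have h1 := ((coshβ_hasDeriv β x).mul hA).const_mul 2
  have h2 := ((expβ_hasDeriv β x).mul hB).const_mul 2
  have h3 := (expβ_hasDeriv β x).const_mul (c * β)
  have hraw := (h1.sub h2).sub h3
  have hfinal := hraw.congr_of_eventuallyEq (f₁ := F1fun β c h)
    (Filter.Eventually.of_forall fun y => by simp only [F1fun, Pi.sub_apply, Pi.mul_apply]; ring)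
  refine hfinal.congr_deriv ?_
  symm
  have key : Real.exp (-(β * x)) * (Real.cosh (β * x) + Real.sinh (β * x)) = 1 := by
    rw [Real.cosh_add_sinh, ← Real.exp_add]
    simp
  unfold F2fun
  linear_combination (2 * h x) * key

lemma G0_eq {α : ℝ} (hα : 0 < α) (hβe : β = Real.sqrt (2 * α))
    (hcont : ContinuousOn h (Set.Ici 0)) (hM : ∀ y ∈ Set.Ici (0 : ℝ), |h y| ≤ M)
    {x : ℝ} (hx : 0 < x) :
    G0 α h x = (2 / β) * (Real.sinh (β * x) * Afun β h x +
      Real.exp (-(β * x)) * Bfun β h x) := by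
  subst hβe
  set β := Real.sqrt (2 * α) with hβd
  have hβ : 0 < β := Real.sqrt_pos.2 (by linarith)
  have e1 : Set.EqOn (fun y => g0 α x y * h y)
      (fun y => ((2 / β) * Real.exp (-(β * x))) * (Real.sinh (β * y) * h y)) (Set.Ioc 0 x) := by
    intro y hy
    simp only [g0, min_eq_right hy.2, max_eq_left hy.2, ← hβd]
    ring
  have e2 : Set.EqOn (fun y => g0 α x y * h y)
      (fun y => ((2 / β) * Real.sinh (β * x)) * (Real.exp (-(β * y)) * h y)) (Set.Ioi x) := by
    intro y hy
    simp only [g0, min_eq_left (le_of_lt (Set.mem_Ioi.1 hy)), max_eq_right (le_of_lt (Set.mem_Ioi.1 hy)), ← hβd]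
    ring
  have i1 : IntegrableOn (fun y => g0 α x y * h y) (Set.Ioc 0 x) :=
    IntegrableOn.congr_fun ((intS hβ hcont hx.le).const_mul _) e1.symm measurableSet_Ioc
  have i2 : IntegrableOn (fun y => g0 α x y * h y) (Set.Ioi x) :=
    IntegrableOn.congr_fun ((intE hβ hcont hM hx.le).const_mul _) e2.symm measurableSet_Ioi
  rw [G0, show Set.Ioi (0:ℝ) = Set.Ioc 0 x ∪ Set.Ioi x from
      (Set.Ioc_union_Ioi_eq_Ioi hx.le).symm,
    MeasureTheory.setIntegral_union Set.Ioc_disjoint_Ioi_same measurableSet_Ioi i1 i2,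
    MeasureTheory.setIntegral_congr_fun measurableSet_Ioc e1,
    MeasureTheory.setIntegral_congr_fun measurableSet_Ioi e2,
    MeasureTheory.integral_const_mul, MeasureTheory.integral_const_mul]
  unfold Afun Bfun
  ring

lemma G0_bound {α : ℝ} (hα : 0 < α) (hβe : β = Real.sqrt (2 * α))
    (hcont : ContinuousOn h (Set.Ici 0)) (hM : ∀ y ∈ Set.Ici (0 : ℝ), |h y| ≤ M)
    (hM0 : 0 ≤ M) {x : ℝ} (hx : 0 < x) :
    |G0 α h x| ≤ (2 * M / β ^ 2) * (1 - Real.exp (-(β * x))) := by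
  have hβ : 0 < β := hβe ▸ Real.sqrt_pos.2 (by linarith)
  have hA := A_bound hβ hcont hM hx.le
  have hB := B_bound hβ hcont hM hx.le
  have hs : 0 ≤ Real.sinh (β * x) := Real.sinh_nonneg_iff.2 (mul_nonneg hβ.le hx.le)
  have he : (0:ℝ) ≤ Real.exp (-(β * x)) := (Real.exp_pos _).le
  have key : Real.exp (-(β * x)) * (Real.cosh (β * x) + Real.sinh (β * x)) = 1 := by
    rw [Real.cosh_add_sinh, ← Real.exp_add]
    simp
  rw [G0_eq hα hβe hcont hM hx, abs_mul, abs_of_nonneg (by positivity : (0:ℝ) ≤ 2 / β)]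
  have h1 : |Real.sinh (β * x) * Afun β h x + Real.exp (-(β * x)) * Bfun β h x| ≤
      Real.sinh (β * x) * (M * Real.exp (-(β * x)) / β) +
      Real.exp (-(β * x)) * (M * (Real.cosh (β * x) - 1) / β) := by
    refine (abs_add_le _ _).trans ?_
    rw [abs_mul, abs_mul, abs_of_nonneg hs, abs_of_nonneg he]
    gcongr
  calc (2 / β) * |Real.sinh (β * x) * Afun β h x + Real.exp (-(β * x)) * Bfun β h x|
      ≤ (2 / β) * (Real.sinh (β * x) * (M * Real.exp (-(β * x)) / β) +
        Real.exp (-(β * x)) * (M * (Real.cosh (β * x) - 1) / β)) := by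
        exact mul_le_mul_of_nonneg_left h1 (by positivity)
    _ = (2 * M / β ^ 2) * (1 - Real.exp (-(β * x))) := by
        field_simp
        linear_combination M * key

end aux

/-- For an admissible quadruple, `α > 0`, `h ∈ C₀([0,∞))`, `c ∈ ℝ` and
`f(0) = c`, `f(x) = G⁰_α h(x) + c·e^{−√(2α)x}` for `x > 0`: the function
`x ↦ f(0) − f(x)` is `p₄`-integrable on `(0,∞)`, and the boundary identity
`p₁·f(0) − p₂·f'(0⁺) + (p₃/2)·f''(0⁺) + ∫ (f(0)−f(x)) p₄(dx) = 0` holds iff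
`c·(p₁ + √(2α)p₂ + αp₃ + ∫(1−e^{−√(2α)x})p₄(dx))
  = 2p₂·∫ e^{−√(2α)x}h(x)dx + p₃·h(0) + ∫ G⁰_α h dp₄`. -/
theorem stmt5 (p₁ p₂ p₃ : ℝ) (p₄ : Measure ℝ) (hp : IsAdmissible p₁ p₂ p₃ p₄)
    (α : ℝ) (hα : 0 < α) (h : ℝ → ℝ) (hh : MemC0 h) (c : ℝ)
    (f : ℝ → ℝ) (hf0 : f 0 = c)
    (hf : ∀ x, 0 < x → f x = G0 α h x + c * Real.exp (-(Real.sqrt (2 * α) * x)))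
    (L₁ L₂ : ℝ)
    (hL₁ : Filter.Tendsto (deriv f) (nhdsWithin 0 (Set.Ioi 0)) (nhds L₁))
    (hL₂ : Filter.Tendsto (deriv (deriv f)) (nhdsWithin 0 (Set.Ioi 0)) (nhds L₂)) :
    IntegrableOn (fun x => f 0 - f x) (Set.Ioi 0) p₄ ∧
    (p₁ * f 0 - p₂ * L₁ + p₃ / 2 * L₂ +
        (∫ x in Set.Ioi (0 : ℝ), (f 0 - f x) ∂p₄) = 0 ↔
      c * (p₁ + Real.sqrt (2 * α) * p₂ + α * p₃ +
            ∫ x in Set.Ioi (0 : ℝ), (1 - Real.exp (-(Real.sqrt (2 * α) * x))) ∂p₄) =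
        2 * p₂ * (∫ x in Set.Ioi (0 : ℝ), Real.exp (-(Real.sqrt (2 * α) * x)) * h x) +
          p₃ * h 0 + ∫ x in Set.Ioi (0 : ℝ), G0 α h x ∂p₄) := by
  obtain ⟨M, hM0, hM⟩ := memC0_bound hh
  have hcont := hh.1
  set β := Real.sqrt (2 * α) with hβd
  have hβ : 0 < β := Real.sqrt_pos.2 (by linarith)
  have hβ2 : β ^ 2 = 2 * α := Real.sq_sqrt (by linarith)
  have hβe : β = Real.sqrt (2 * α) := hβd
  -- f agrees with Ffun on Ioi 0
  have hfF : ∀ x ∈ Set.Ioi (0:ℝ), f x = Ffun β c h x := by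
    intro x hx
    rw [hf x hx, G0_eq hα hβe hcont hM hx, Ffun]
  -- derivative identities
  have hd1 : ∀ x ∈ Set.Ioi (0:ℝ), deriv f x = F1fun β c h x := by
    intro x hx
    have he : f =ᶠ[nhds x] Ffun β c h := by
      filter_upwards [Ioi_mem_nhds hx] with y hy using hfF y hy
    rw [he.deriv_eq, (F_hasDeriv hβ hcont hM c hx).deriv]
  have hd2 : ∀ x ∈ Set.Ioi (0:ℝ), deriv (deriv f) x = F2fun β c h x := by
    intro x hx
    have he : deriv f =ᶠ[nhds x] F1fun β c h := by
      filter_upwards [Ioi_mem_nhds hx] with y hy using hd1 y hy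
    rw [he.deriv_eq, (F1_hasDeriv hβ hcont hM c hx).deriv]
  -- limits of the building blocks at 0⁺
  have hAt := A_tendsto hβ hcont hM
  have hBt := B_tendsto hβ hcont hM
  have hht : Filter.Tendsto h (nhdsWithin 0 (Set.Ioi 0)) (nhds (h 0)) :=
    (hcont 0 Set.self_mem_Ici).mono_left (nhdsWithin_mono 0 Set.Ioi_subset_Ici_self)
  have hcosh : Filter.Tendsto (fun x => Real.cosh (β * x)) (nhdsWithin 0 (Set.Ioi 0)) (nhds 1) := by
    have := ((by fun_prop : Continuous fun x : ℝ => Real.cosh (β * x)).tendsto 0).mono_left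
      (nhdsWithin_le_nhds (s := Set.Ioi (0:ℝ)))
    simpa using this
  have hsinh0 : Filter.Tendsto (fun x => Real.sinh (β * x)) (nhdsWithin 0 (Set.Ioi 0)) (nhds 0) := by
    have := ((by fun_prop : Continuous fun x : ℝ => Real.sinh (β * x)).tendsto 0).mono_left
      (nhdsWithin_le_nhds (s := Set.Ioi (0:ℝ)))
    simpa using this
  have hexp : Filter.Tendsto (fun x => Real.exp (-(β * x))) (nhdsWithin 0 (Set.Ioi 0)) (nhds 1) := by
    have := ((by fun_prop : Continuous fun x : ℝ => Real.exp (-(β * x))).tendsto 0).mono_left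
      (nhdsWithin_le_nhds (s := Set.Ioi (0:ℝ)))
    simpa using this
  -- identify L₁
  have hL1 : L₁ = 2 * Afun β h 0 - c * β := by
    have hcomp : Filter.Tendsto (F1fun β c h) (nhdsWithin 0 (Set.Ioi 0))
        (nhds (2 * 1 * Afun β h 0 - 2 * 1 * 0 - c * β * 1)) := by
      unfold F1fun
      exact (((tendsto_const_nhds.mul hcosh).mul hAt).sub
        ((tendsto_const_nhds.mul hexp).mul hBt)).sub (tendsto_const_nhds.mul hexp)
    have heq : (2 * 1 * Afun β h 0 - 2 * 1 * 0 - c * β * 1) = 2 * Afun β h 0 - c * β := by ring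
    rw [heq] at hcomp
    have hde : deriv f =ᶠ[nhdsWithin 0 (Set.Ioi 0)] F1fun β c h := by
      filter_upwards [self_mem_nhdsWithin] with x hx using hd1 x hx
    exact tendsto_nhds_unique hL₁ (Filter.Tendsto.congr' hde.symm hcomp)
  -- identify L₂
  have hL2 : L₂ = c * β ^ 2 - 2 * h 0 := by
    have hcomp : Filter.Tendsto (F2fun β c h) (nhdsWithin 0 (Set.Ioi 0))
        (nhds (2 * β * 0 * Afun β h 0 + 2 * β * 1 * 0 - 2 * h 0 + c * β ^ 2 * 1)) := by
      unfold F2fun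
      exact ((((tendsto_const_nhds.mul hsinh0).mul hAt).add
        ((tendsto_const_nhds.mul hexp).mul hBt)).sub
        (tendsto_const_nhds.mul hht)).add (tendsto_const_nhds.mul hexp)
    have heq : (2 * β * 0 * Afun β h 0 + 2 * β * 1 * 0 - 2 * h 0 + c * β ^ 2 * 1)
        = c * β ^ 2 - 2 * h 0 := by ring
    rw [heq] at hcomp
    have hde : deriv (deriv f) =ᶠ[nhdsWithin 0 (Set.Ioi 0)] F2fun β c h := by
      filter_upwards [self_mem_nhdsWithin] with x hx using hd2 x hx
    exact tendsto_nhds_unique hL₂ (Filter.Tendsto.congr' hde.symm hcomp)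
  -- continuity of Ffun on Ioi 0
  have hFc : ContinuousOn (Ffun β c h) (Set.Ioi 0) :=
    fun x hx => (F_hasDeriv hβ hcont hM c hx).continuousAt.continuousWithinAt
  -- the dominating function min 1 x is p₄-integrable on Ioi 0
  have hminint : Integrable (fun x => min 1 x) (p₄.restrict (Set.Ioi 0)) := by
    refine ⟨(continuous_const.min continuous_id).aestronglyMeasurable, ?_⟩
    rw [HasFiniteIntegral]
    have heq : ∫⁻ x in Set.Ioi 0, ‖min 1 x‖ₑ ∂p₄
        = ∫⁻ x in Set.Ioi 0, ENNReal.ofReal (min 1 x) ∂p₄ := by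
      refine lintegral_congr_ae ?_
      filter_upwards [ae_restrict_mem measurableSet_Ioi] with x hx
      exact Real.enorm_eq_ofReal (le_min zero_le_one hx.le)
    rw [heq]
    exact hp.2.2.2.2.1
  -- pointwise bounds
  have hme : ∀ x : ℝ, 0 < x → 1 - Real.exp (-(β * x)) ≤ max 1 β * min 1 x := by
    intro x hx
    have h1 : 1 - Real.exp (-(β * x)) ≤ min 1 (β * x) := by
      refine le_min ?_ ?_
      · linarith [(Real.exp_pos (-(β * x))).le]
      · linarith [Real.add_one_le_exp (-(β * x))]
    refine h1.trans ?_
    rcases le_total x 1 with hx1 | hx1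
    · rw [min_eq_right hx1]
      calc min 1 (β * x) ≤ β * x := min_le_right _ _
        _ ≤ max 1 β * x := mul_le_mul_of_nonneg_right (le_max_right _ _) hx.le
    · rw [min_eq_left hx1]
      calc min 1 (β * x) ≤ 1 := min_le_left _ _
        _ ≤ max 1 β * 1 := by simpa using le_max_left (1:ℝ) β
  have h1enn : ∀ x : ℝ, 0 < x → 0 ≤ 1 - Real.exp (-(β * x)) := by
    intro x hx
    have : Real.exp (-(β * x)) ≤ 1 := by
      rw [← Real.exp_zero]
      exact Real.exp_le_exp.2 (neg_nonpos.2 (mul_nonneg hβ.le hx.le))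
    linarith
  have hptw : ∀ x ∈ Set.Ioi (0:ℝ), |c - Ffun β c h x| ≤
      ((|c| + 2 * M / β ^ 2) * max 1 β) * min 1 x := by
    intro x hx
    have hG := G0_bound hα hβe hcont hM hM0 hx
    have hFx : Ffun β c h x = G0 α h x + c * Real.exp (-(β * x)) := by
      rw [G0_eq hα hβe hcont hM hx, Ffun]
    have habs : |c - Ffun β c h x| ≤ |c| * (1 - Real.exp (-(β * x))) + |G0 α h x| := by
      have : c - Ffun β c h x = c * (1 - Real.exp (-(β * x))) - G0 α h x := by
        rw [hFx]; ring
      rw [this]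
      refine (abs_sub _ _).trans ?_
      rw [abs_mul, abs_of_nonneg (h1enn x hx)]
    have hmin0 : (0:ℝ) ≤ min 1 x := le_min zero_le_one (le_of_lt hx)
    calc |c - Ffun β c h x| ≤ |c| * (1 - Real.exp (-(β * x))) + |G0 α h x| := habs
      _ ≤ |c| * (1 - Real.exp (-(β * x))) + (2 * M / β ^ 2) * (1 - Real.exp (-(β * x))) := by
          linarith [hG]
      _ = (|c| + 2 * M / β ^ 2) * (1 - Real.exp (-(β * x))) := by ring
      _ ≤ (|c| + 2 * M / β ^ 2) * (max 1 β * min 1 x) := by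
          refine mul_le_mul_of_nonneg_left (hme x hx) ?_
          positivity
      _ = ((|c| + 2 * M / β ^ 2) * max 1 β) * min 1 x := by ring
  -- integrability of c - Ffun, then of f 0 - f
  have hint0 : Integrable (fun x => c - Ffun β c h x) (p₄.restrict (Set.Ioi 0)) := by
    refine Integrable.mono' (hminint.const_mul ((|c| + 2 * M / β ^ 2) * max 1 β)) ?_ ?_
    · exact (continuousOn_const.sub hFc).aestronglyMeasurable measurableSet_Ioi
    · filter_upwards [ae_restrict_mem measurableSet_Ioi] with x hx
      simpa [Real.norm_eq_abs] using hptw x hx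
  have hintf : IntegrableOn (fun x => f 0 - f x) (Set.Ioi 0) p₄ := by
    refine hint0.congr ?_
    refine (ae_restrict_iff' measurableSet_Ioi).2 (Filter.Eventually.of_forall fun x hx => ?_)
    show c - Ffun β c h x = f 0 - f x
    rw [hf0, hfF x hx]
  -- integrability of the pieces
  have hg1int : Integrable (fun x => 1 - Real.exp (-(β * x))) (p₄.restrict (Set.Ioi 0)) := by
    refine Integrable.mono' (hminint.const_mul (max 1 β)) ?_ ?_
    · exact (continuous_const.sub
        (Real.continuous_exp.comp (continuous_const.mul continuous_id).neg)).aestronglyMeasurable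
    · filter_upwards [ae_restrict_mem measurableSet_Ioi] with x hx
      rw [Real.norm_eq_abs, abs_of_nonneg (h1enn x hx)]
      exact hme x hx
  have hG0int : Integrable (G0 α h) (p₄.restrict (Set.Ioi 0)) := by
    have hint1 : Integrable (fun x => Ffun β c h x - c * Real.exp (-(β * x)))
        (p₄.restrict (Set.Ioi 0)) := by
      refine Integrable.mono' (hminint.const_mul ((2 * M / β ^ 2) * max 1 β)) ?_ ?_
      · exact (hFc.sub ((Real.continuous_exp.comp
          (continuous_const.mul continuous_id).neg).continuousOn.const_smul c)).aestronglyMeasurable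
          measurableSet_Ioi
      · filter_upwards [ae_restrict_mem measurableSet_Ioi] with x hx
        have hFx : Ffun β c h x - c * Real.exp (-(β * x)) = G0 α h x := by
          rw [G0_eq hα hβe hcont hM hx, Ffun]; ring
        rw [Real.norm_eq_abs, hFx]
        calc |G0 α h x| ≤ (2 * M / β ^ 2) * (1 - Real.exp (-(β * x))) :=
              G0_bound hα hβe hcont hM hM0 hx
          _ ≤ (2 * M / β ^ 2) * (max 1 β * min 1 x) := by
              refine mul_le_mul_of_nonneg_left (hme x hx) ?_
              positivity
          _ = ((2 * M / β ^ 2) * max 1 β) * min 1 x := by ring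
    refine hint1.congr ?_
    refine (ae_restrict_iff' measurableSet_Ioi).2 (Filter.Eventually.of_forall fun x hx => ?_)
    show Ffun β c h x - c * Real.exp (-(β * x)) = G0 α h x
    rw [G0_eq hα hβe hcont hM hx, Ffun]; ring
  -- split the p₄ integral
  have hIsplit : (∫ x in Set.Ioi (0:ℝ), (f 0 - f x) ∂p₄) =
      c * (∫ x in Set.Ioi (0:ℝ), (1 - Real.exp (-(β * x))) ∂p₄) -
      ∫ x in Set.Ioi (0:ℝ), G0 α h x ∂p₄ := by
    have heqon : Set.EqOn (fun x => f 0 - f x)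
        (fun x => c * (1 - Real.exp (-(β * x))) - G0 α h x) (Set.Ioi 0) := by
      intro x hx
      simp only
      rw [hf0, hf x hx]
      ring
    rw [MeasureTheory.setIntegral_congr_fun measurableSet_Ioi heqon,
      MeasureTheory.integral_sub (hg1int.const_mul c) hG0int,
      MeasureTheory.integral_const_mul]
  refine ⟨hintf, ?_⟩
  rw [hIsplit, hf0, hL1, hL2,
    show (∫ x in Set.Ioi (0:ℝ), Real.exp (-(β * x)) * h x) = Afun β h 0 from rfl]
  constructor
  · intro H
    linear_combination H - c * p₃ / 2 * hβ2
  · intro H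
    linear_combination H + c * p₃ / 2 * hβ2
end

section
/- Let h : (0,∞) → ℝ be continuous with compact support contained in an interval [l, r] ⊂ (0,∞), where 0 < l ≤ r. Then there exist constants α₀ > 0 and C > 0 such that |α·G⁰_α h(x)| ≤ C·min(x, l/2) for every α ≥ α₀ and every x > 0. -/
open MeasureTheory Real Filter Topology

lemma aux_sinh_le {t : ℝ} (ht : 0 ≤ t) : Real.sinh t ≤ t * Real.exp t := by
  rw [Real.sinh_eq]
  have h1 := Real.add_one_le_exp (-(2*t))
  have h2 : Real.exp (-t) = Real.exp t * Real.exp (-(2*t)) := by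
    rw [← Real.exp_add]; ring_nf
  nlinarith [Real.exp_pos t]

lemma aux_g0_cont (α x : ℝ) : Continuous (fun y => g0 α x y) := by
  unfold g0; fun_prop

lemma aux_g0_nonneg {α x y : ℝ} (hα : 0 < α) (hx : 0 ≤ x) (hy : 0 ≤ y) :
    0 ≤ g0 α x y := by
  have hs : 0 ≤ Real.sqrt (2 * α) := Real.sqrt_nonneg _
  have h1 : 0 ≤ Real.sinh (Real.sqrt (2 * α) * min x y) :=
    Real.sinh_nonneg_iff.2 (by positivity)
  have h2 : (0:ℝ) ≤ 2 / Real.sqrt (2 * α) := by positivity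
  have h3 := (Real.exp_pos (-(Real.sqrt (2 * α) * max x y))).le
  unfold g0
  positivity

/-- Integrability and bound on the full resolvent integral. -/
lemma aux_g0_integral {α x : ℝ} (hα : 0 < α) (hx : 0 < x) :
    IntegrableOn (fun y => g0 α x y) (Set.Ioi 0) ∧
      ∫ y in Set.Ioi (0:ℝ), g0 α x y ≤ 1 / α := by
  set s : ℝ := Real.sqrt (2 * α) with hsdef
  have hs : 0 < s := Real.sqrt_pos.2 (by linarith)
  have hs2 : s ^ 2 = 2 * α := Real.sq_sqrt (by linarith)
  have hI1 : IntegrableOn (fun y => g0 α x y) (Set.Ioc 0 x) :=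
    (aux_g0_cont α x).integrableOn_Ioc
  have hI2 : IntegrableOn (fun y => g0 α x y) (Set.Ioi x) := by
    have hbase : IntegrableOn (fun y : ℝ => (2 / s * Real.sinh (s * x)) * Real.exp (-s * y))
        (Set.Ioi x) := (exp_neg_integrableOn_Ioi x hs).const_mul _
    refine hbase.congr_fun (fun y hy => ?_) measurableSet_Ioi
    have hxy : x ≤ y := le_of_lt hy
    simp only [g0, ← hsdef, min_eq_left hxy, max_eq_right hxy, neg_mul]
  have hunion : Set.Ioc 0 x ∪ Set.Ioi x = Set.Ioi (0:ℝ) := Set.Ioc_union_Ioi_eq_Ioi hx.le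
  have hdisj : Disjoint (Set.Ioc (0:ℝ) x) (Set.Ioi x) := Set.Ioc_disjoint_Ioi le_rfl
  constructor
  · rw [← hunion]; exact hI1.union hI2
  · have hsplit : ∫ y in Set.Ioi (0:ℝ), g0 α x y
        = (∫ y in Set.Ioc (0:ℝ) x, g0 α x y) + ∫ y in Set.Ioi x, g0 α x y := by
      rw [← hunion, MeasureTheory.setIntegral_union hdisj measurableSet_Ioi hI1 hI2]
    -- first piece
    have hpiece1 : ∫ y in Set.Ioc (0:ℝ) x, g0 α x y
        = (2 / s) * Real.exp (-(s * x)) * ((Real.cosh (s * x) - 1) / s) := by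
      have hcongr : ∫ y in Set.Ioc (0:ℝ) x, g0 α x y
          = ∫ y in Set.Ioc (0:ℝ) x, (2 / s) * Real.exp (-(s * x)) * Real.sinh (s * y) := by
        refine MeasureTheory.setIntegral_congr_fun measurableSet_Ioc (fun y hy => ?_)
        have h1 : y ≤ x := hy.2
        simp only [g0, min_eq_right h1, max_eq_left h1]
        ring
      rw [hcongr, ← intervalIntegral.integral_of_le hx.le,
        intervalIntegral.integral_const_mul]
      have hderiv : ∀ t ∈ Set.uIcc (0:ℝ) x,
          HasDerivAt (fun y => Real.cosh (s * y) / s) (Real.sinh (s * t)) t := by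
        intro t _
        have h1 : HasDerivAt (fun y : ℝ => s * y) s t := by
          simpa using (hasDerivAt_id t).const_mul s
        have h2 := (h1.cosh).div_const s
        have h3 : Real.sinh (s * t) * s / s = Real.sinh (s * t) := by
          rw [mul_div_assoc, div_self hs.ne', mul_one]
        rwa [h3] at h2
      have hiint : IntervalIntegrable (fun y => Real.sinh (s * y)) volume 0 x :=
        (Real.continuous_sinh.comp (continuous_const.mul continuous_id)).intervalIntegrable 0 x
      rw [intervalIntegral.integral_eq_sub_of_hasDerivAt hderiv hiint]
      rw [mul_zero, Real.cosh_zero]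
      ring
    -- second piece
    have hpiece2 : ∫ y in Set.Ioi x, g0 α x y
        = (2 / s) * Real.sinh (s * x) * (s⁻¹ * Real.exp (-(s * x))) := by
      have hcongr : ∫ y in Set.Ioi x, g0 α x y
          = ∫ y in Set.Ioi x, (2 / s * Real.sinh (s * x)) * Real.exp (-(s * y)) := by
        refine MeasureTheory.setIntegral_congr_fun measurableSet_Ioi (fun y hy => ?_)
        have hxy : x ≤ y := le_of_lt hy
        simp only [g0, ← hsdef, min_eq_left hxy, max_eq_right hxy]
      rw [hcongr, MeasureTheory.integral_const_mul]
      congr 1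
      have := integral_comp_mul_left_Ioi (fun u => Real.exp (-u)) x hs
      simp only [smul_eq_mul] at this
      calc ∫ y in Set.Ioi x, Real.exp (-(s * y))
          = s⁻¹ * ∫ u in Set.Ioi (s * x), Real.exp (-u) := this
        _ = s⁻¹ * Real.exp (-(s * x)) := by rw [integral_exp_neg_Ioi]
    rw [hsplit, hpiece1, hpiece2]
    have hkey : Real.exp (-(s*x)) * (Real.cosh (s*x) - 1) + Real.sinh (s*x) * Real.exp (-(s*x)) ≤ 1 := by
      rw [Real.cosh_eq, Real.sinh_eq]
      simp only [Real.exp_neg]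
      have hpos := Real.exp_pos (s * x)
      have h1 : (Real.exp (s*x))⁻¹ * Real.exp (s*x) = 1 := inv_mul_cancel₀ (ne_of_gt hpos)
      nlinarith [inv_pos.2 hpos]
    have h2s : (0:ℝ) < 2 / s ^ 2 := by positivity
    have heq : (2 / s) * Real.exp (-(s * x)) * ((Real.cosh (s * x) - 1) / s)
        + (2 / s) * Real.sinh (s * x) * (s⁻¹ * Real.exp (-(s * x)))
        = (2 / s ^ 2) * (Real.exp (-(s*x)) * (Real.cosh (s*x) - 1)
            + Real.sinh (s*x) * Real.exp (-(s*x))) := by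
      field_simp
    rw [heq]
    calc (2 / s ^ 2) * (Real.exp (-(s*x)) * (Real.cosh (s*x) - 1)
            + Real.sinh (s*x) * Real.exp (-(s*x))) ≤ (2 / s ^ 2) * 1 :=
          mul_le_mul_of_nonneg_left hkey h2s.le
      _ = 1 / α := by rw [hs2]; field_simp

lemma aux_exp_bound {a c s : ℝ} (ha : 1 ≤ a) (hc : 0 < c) (hs : 0 < s)
    (hs2 : s ^ 2 = 2 * a) : a * Real.exp (-(s * c)) * c ^ 4 ≤ 64 := by
  have ha0 : (0:ℝ) < a := lt_of_lt_of_le one_pos ha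
  have hu : 0 < s * c := mul_pos hs hc
  have h4 : Real.exp (s * c) = (Real.exp (s * c / 4)) ^ 4 := by
    rw [← Real.exp_nat_mul]
    norm_num
    ring_nf
  have h5 : (s * c / 4) ^ 4 ≤ Real.exp (s * c) := by
    rw [h4]
    have hle : s * c / 4 ≤ Real.exp (s * c / 4) := by
      have := Real.add_one_le_exp (s * c / 4); linarith
    exact pow_le_pow_left₀ (by positivity) hle 4
  have hu4 : (s * c) ^ 4 = 4 * a ^ 2 * c ^ 4 := by
    have h : (s * c) ^ 4 = (s ^ 2) ^ 2 * c ^ 4 := by ring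
    rw [h, hs2]; ring
  have hprod : Real.exp (-(s * c)) * Real.exp (s * c) = 1 := by
    rw [← Real.exp_add]; simp
  have h6 : Real.exp (-(s * c)) * (s * c) ^ 4 ≤ 256 := by
    nlinarith [mul_le_mul_of_nonneg_left h5 (Real.exp_pos (-(s * c))).le, hprod]
  rw [hu4] at h6
  have hE := (Real.exp_pos (-(s * c))).le
  nlinarith [h6, ha, hE, mul_nonneg (mul_nonneg ha0.le hE) (pow_nonneg hc.le 4)]

/-- If `h` is continuous with support contained in `[l,r] ⊂ (0,∞)`, then there are
`α₀ > 0` and `C > 0` with `|α·G⁰_α h(x)| ≤ C·min(x, l/2)` for all `α ≥ α₀`, `x > 0`. -/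
theorem stmt7 (h : ℝ → ℝ) (hcont : Continuous h) (l r : ℝ) (hl : 0 < l) (hlr : l ≤ r)
    (hsupp : ∀ x, x ∉ Set.Icc l r → h x = 0) :
    ∃ α₀ > (0 : ℝ), ∃ C > (0 : ℝ), ∀ α ≥ α₀, ∀ x > (0 : ℝ),
      |α * G0 α h x| ≤ C * min x (l / 2) := by
  -- a bound on h
  obtain ⟨B0, hB0⟩ := isCompact_Icc.exists_bound_of_continuousOn
    (hcont.continuousOn : ContinuousOn h (Set.Icc l r))
  set B : ℝ := max B0 1 with hBdef
  have hB : (0:ℝ) < B := lt_of_lt_of_le one_pos (le_max_right _ _)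
  have hBb : ∀ y, |h y| ≤ B := by
    intro y
    by_cases hy : y ∈ Set.Icc l r
    · exact le_trans (hB0 y hy) (le_max_left _ _)
    · rw [hsupp y hy]; simpa using hB.le
  set C₁ : ℝ := 128 * B * (r - l) * (2/l)^4 with hC1def
  have hC1 : 0 ≤ C₁ := by
    have hrl := sub_nonneg.2 hlr
    positivity
  set C : ℝ := C₁ + 2 * B / l with hCdef
  have hC : 0 < C := lt_of_lt_of_le (by positivity : (0:ℝ) < 2 * B / l) (by linarith)
  refine ⟨1, one_pos, C, hC, fun α hα x hx => ?_⟩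
  have hα0 : (0:ℝ) < α := lt_of_lt_of_le one_pos hα
  set s : ℝ := Real.sqrt (2 * α) with hsdef
  have hs : 0 < s := Real.sqrt_pos.2 (by linarith)
  have hs2 : s ^ 2 = 2 * α := Real.sq_sqrt (by linarith)
  have habs : |α * G0 α h x| = α * |∫ y in Set.Ioi (0:ℝ), g0 α x y * h y| := by
    rw [abs_mul, abs_of_pos hα0]; rfl
  rcases le_or_gt x (l/2) with hxl | hxl
  · -- small x
    have hmin : min x (l/2) = x := min_eq_left hxl
    have hIccsub : Set.Icc l r ⊆ Set.Ioi (0:ℝ) := fun y hy => lt_of_lt_of_le hl hy.1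
    have hrestrict : ∫ y in Set.Ioi (0:ℝ), g0 α x y * h y
        = ∫ y in Set.Icc l r, g0 α x y * h y := by
      refine MeasureTheory.setIntegral_eq_of_subset_of_forall_diff_eq_zero
        measurableSet_Ioi hIccsub (fun y hy => ?_)
      rw [hsupp y hy.2, mul_zero]
    have hbound : ∀ y ∈ Set.Icc l r, ‖g0 α x y * h y‖ ≤ 2 * x * Real.exp (-(s * (l/2))) * B := by
      intro y hy
      have hly : l ≤ y := hy.1
      have hxy : x ≤ y := le_trans (le_trans hxl (by linarith)) hly
      have hg0 : g0 α x y ≤ 2 * x * Real.exp (-(s * (l/2))) := by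
        simp only [g0, ← hsdef, min_eq_left hxy, max_eq_right hxy]
        have h1 : Real.sinh (s * x) ≤ (s * x) * Real.exp (s * x) :=
          aux_sinh_le (by positivity)
        have h2 : (2 / s) * Real.sinh (s * x) * Real.exp (-(s * y))
            ≤ (2 / s) * ((s * x) * Real.exp (s * x)) * Real.exp (-(s * y)) :=
          mul_le_mul_of_nonneg_right
            (mul_le_mul_of_nonneg_left h1 (by positivity : (0:ℝ) ≤ 2 / s))
            (Real.exp_pos _).le
        refine le_trans h2 ?_
        have h3 : (2 / s) * ((s * x) * Real.exp (s * x)) * Real.exp (-(s * y))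
            = 2 * x * Real.exp (s * x - s * y) := by
          rw [Real.exp_sub, Real.exp_neg]
          field_simp
        rw [h3]
        have h4 : s * x - s * y ≤ -(s * (l/2)) := by nlinarith
        have := Real.exp_le_exp.2 h4
        nlinarith [hx, this]
      have hg0n : 0 ≤ g0 α x y := aux_g0_nonneg hα0 hx.le (by linarith : (0:ℝ) ≤ y)
      rw [norm_mul, Real.norm_eq_abs, Real.norm_eq_abs, abs_of_nonneg hg0n]
      calc g0 α x y * |h y| ≤ (2 * x * Real.exp (-(s * (l/2)))) * B :=
        mul_le_mul hg0 (hBb y) (abs_nonneg _) (by positivity)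
      _ = 2 * x * Real.exp (-(s * (l/2))) * B := by ring
    have hnorm : |∫ y in Set.Icc l r, g0 α x y * h y|
        ≤ (2 * x * Real.exp (-(s * (l/2))) * B) * (r - l) := by
      have hμ : volume (Set.Icc l r) < ⊤ := measure_Icc_lt_top
      have := MeasureTheory.norm_setIntegral_le_of_norm_le_const hμ hbound
      rw [measureReal_def, Real.volume_Icc, ENNReal.toReal_ofReal (by linarith)] at this
      exact this
    -- exponential bound
    have hexpb := aux_exp_bound hα (by linarith : (0:ℝ) < l/2) hs hs2
    have hexp : α * Real.exp (-(s * (l/2))) ≤ 64 * (2/l)^4 := by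
      have hpos : (0:ℝ) < (l/2)^4 := by positivity
      have hone : ((2:ℝ)/l)^4 * (l/2)^4 = 1 := by
        field_simp
      nlinarith [hexpb, hpos, hone, (Real.exp_pos (-(s * (l/2)))).le]
    rw [habs, hrestrict, hmin]
    calc α * |∫ y in Set.Icc l r, g0 α x y * h y|
        ≤ α * ((2 * x * Real.exp (-(s * (l/2))) * B) * (r - l)) :=
          mul_le_mul_of_nonneg_left hnorm hα0.le
      _ = (2 * B * (r - l) * (α * Real.exp (-(s * (l/2))))) * x := by ring
      _ ≤ (2 * B * (r - l) * (64 * (2/l)^4)) * x := by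
          apply mul_le_mul_of_nonneg_right _ hx.le
          apply mul_le_mul_of_nonneg_left hexp
          have := sub_nonneg.2 hlr
          positivity
      _ = C₁ * x := by rw [hC1def]; ring
      _ ≤ C * x := by
          apply mul_le_mul_of_nonneg_right _ hx.le
          rw [hCdef]
          have : 0 ≤ 2 * B / l := by positivity
          linarith
  · -- large x
    have hmin : min x (l/2) = l/2 := min_eq_right hxl.le
    obtain ⟨hint, hval⟩ := aux_g0_integral hα0 hx
    have hstep1 : |∫ y in Set.Ioi (0:ℝ), g0 α x y * h y|
        ≤ ∫ y in Set.Ioi (0:ℝ), B * g0 α x y := by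
      rw [← Real.norm_eq_abs]
      refine le_trans (MeasureTheory.norm_integral_le_integral_norm _) ?_
      refine MeasureTheory.integral_mono_of_nonneg ?_ (hint.const_mul B) ?_
      · filter_upwards with y using norm_nonneg _
      · filter_upwards [MeasureTheory.ae_restrict_mem measurableSet_Ioi] with y hy
        have hg0n : 0 ≤ g0 α x y := aux_g0_nonneg hα0 hx.le (le_of_lt hy)
        rw [norm_mul, Real.norm_eq_abs, Real.norm_eq_abs, abs_of_nonneg hg0n]
        calc g0 α x y * |h y| ≤ g0 α x y * B :=
              mul_le_mul_of_nonneg_left (hBb y) hg0n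
          _ = B * g0 α x y := mul_comm _ _
    have hstep2 : ∫ y in Set.Ioi (0:ℝ), B * g0 α x y ≤ B * (1/α) := by
      rw [MeasureTheory.integral_const_mul]
      exact mul_le_mul_of_nonneg_left hval hB.le
    rw [habs, hmin]
    calc α * |∫ y in Set.Ioi (0:ℝ), g0 α x y * h y| ≤ α * (B * (1/α)) :=
          mul_le_mul_of_nonneg_left (le_trans hstep1 hstep2) hα0.le
      _ = B := by field_simp
      _ = (2 * B / l) * (l/2) := by field_simp
      _ ≤ C * (l/2) := by
          apply mul_le_mul_of_nonneg_right _ (by linarith)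
          rw [hCdef]; linarith
end
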